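/- Let G be a cobweb with presentation (C, I), σ a wedge-selection for (G, C, I), and suppose {u,v} ⊆ I is a good pair such that σ(u) ∩ σ(v) has exactly two connected components. If w ∈ I attaches to both σ(u) and σ(v) and has a neighbour in each of the two components of σ(u) ∩ σ(v), then σ(w) improves at least one of σ(u) and σ(v). -/

import Mathlib

open SimpleGraph

variable {V : Type}

/-- `u` and `v` are connected by a walk in `G` avoiding `S`
(i.e., they lie in the same component of `G - S`). -/
def ReachOutside (G : SimpleGraph V) (S : Set V) (u v : V) : Prop :=
  ∃ p : G.Walk u v, ∀ x ∈ p.support, x ∉ S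

/-- Total weight of a vertex set. -/
noncomputable def setWeight [Finite V] (w : V → ℝ) (A : Set V) : ℝ :=
  ∑ v ∈ (Set.toFinite A).toFinset, w v

/-- `S` is a `w`-balanced separator of `G`: every component of `G - S`
has weight at most half the total weight. -/
def IsBalancedSep [Finite V] (G : SimpleGraph V) (w : V → ℝ) (S : Set V) : Prop :=
  ∀ v, v ∉ S → setWeight w {u | ReachOutside G S u v} ≤ setWeight w (Set.univ : Set V) / 2

/-- Closed neighbourhood `N[A]` of a vertex set. -/
def closedNbhd (G : SimpleGraph V) (A : Set V) : Set V :=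
  A ∪ {x | ∃ a ∈ A, G.Adj a x}

/-- `S` separates `A` from `B` in `G`: every walk from `A` to `B` meets `S`. -/
def Separates (G : SimpleGraph V) (S A B : Set V) : Prop :=
  ∀ a ∈ A, ∀ b ∈ B, ∀ p : G.Walk a b, ∃ x ∈ p.support, x ∈ S

/-- `C` is (the vertex set of) an induced cycle of `G`: the induced subgraph is
connected and every vertex of `C` has exactly two neighbours in `C`. -/
def IsInducedCycle (G : SimpleGraph V) (C : Set V) : Prop :=
  (G.induce C).Connected ∧ ∀ x ∈ C, (G.neighborSet x ∩ C).ncard = 2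

/-- `H` is an induced minor of `G`. -/
def IsInducedMinor {W : Type} (H : SimpleGraph W) (G : SimpleGraph V) : Prop :=
  ∃ X : W → Set V,
    (∀ a, (G.induce (X a)).Connected) ∧
    (Pairwise fun a b => Disjoint (X a) (X b)) ∧
    ∀ a b, a ≠ b → ((∃ u ∈ X a, ∃ v ∈ X b, G.Adj u v) ↔ H.Adj a b)

/-- `H` is a minor of `G`. -/
def IsMinor {W : Type} (H : SimpleGraph W) (G : SimpleGraph V) : Prop :=
  ∃ X : W → Set V,
    (∀ a, (G.induce (X a)).Connected) ∧
    (Pairwise fun a b => Disjoint (X a) (X b)) ∧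
    ∀ a b, H.Adj a b → ∃ u ∈ X a, ∃ v ∈ X b, G.Adj u v

/-- The `ℓ`-wheel: a cycle of length `ℓ` plus a universal vertex (`none`). -/
def wheel (ℓ : ℕ) : SimpleGraph (Option (ZMod ℓ)) :=
  SimpleGraph.fromRel fun a b =>
    a = none ∨ b = none ∨ ∃ i : ZMod ℓ, a = some i ∧ b = some (i + 1)

/-- The `ℓ`-fan: a path on `ℓ` vertices plus a universal vertex (`none`). -/
def fan (ℓ : ℕ) : SimpleGraph (Option (Fin ℓ)) :=
  SimpleGraph.fromRel fun a b =>
    a = none ∨ b = none ∨ ∃ i j : Fin ℓ, a = some i ∧ b = some j ∧ (j : ℕ) = (i : ℕ) + 1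
/-- `G` is a cobweb with presentation `(C, I)`. -/
def IsCobweb (G : SimpleGraph V) (C I : Set V) : Prop :=
  IsInducedCycle G C ∧ I = Cᶜ ∧ I.Nonempty ∧
  (∀ u ∈ I, ∀ v ∈ I, ¬ G.Adj u v) ∧
  (∀ v : V, 2 ≤ (G.neighborSet v).ncard) ∧
  ∀ u ∈ I, ∀ v ∈ I, u ≠ v → ¬ G.neighborSet u ⊆ G.neighborSet v

/-- A subgraph is a cycle: its coercion is connected and 2-regular. -/
def IsCycleSubgraph (G : SimpleGraph V) (W : G.Subgraph) : Prop :=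
  W.coe.Connected ∧ ∀ x ∈ W.verts, (W.neighborSet x).ncard = 2

/-- `W` is a wedge of `(G, C, I)` anchored in `v`: a cycle containing exactly one
vertex of `I`, namely `v`, and exactly two neighbours of `v`. -/
def IsWedge (G : SimpleGraph V) (C I : Set V) (W : G.Subgraph) (v : V) : Prop :=
  IsCycleSubgraph G W ∧ v ∈ I ∧ W.verts ∩ I = {v} ∧
  (W.verts ∩ G.neighborSet v).ncard = 2

/-- `u` attaches to the wedge `W`. -/
def Attaches (G : SimpleGraph V) (u : V) (W : G.Subgraph) : Prop :=
  u ∉ W.verts ∧ G.neighborSet u ⊆ W.verts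

/-- The union of components of `G - V(W)` containing vertices of `C`
(for a non-co-trivial wedge this is the unique such component). -/
def outerPart (G : SimpleGraph V) (C : Set V) (W : G.Subgraph) : Set V :=
  {d | d ∉ W.verts ∧ ∃ c ∈ C, c ∉ W.verts ∧ ReachOutside G W.verts d c}

open Classical in
/-- The barrier `∂W` of a wedge `W` anchored in `v`. -/
noncomputable def barrier (G : SimpleGraph V) (C : Set V) (W : G.Subgraph) (v : V) : Set V :=
  if C ⊆ W.verts then G.neighborSet v
  else {x | x ∉ outerPart G C W ∧ ∃ d ∈ outerPart G C W, G.Adj d x}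

/-- `W₁` (a wedge anchored in `u`) improves `W₂` (a wedge anchored in `v`):
`W₁ - u` is a proper subgraph of `W₂ - v`. -/
def Improves (G : SimpleGraph V) (W₁ : G.Subgraph) (u : V) (W₂ : G.Subgraph) (v : V) : Prop :=
  W₁.deleteVerts {u} ≤ W₂.deleteVerts {v} ∧ W₁.deleteVerts {u} ≠ W₂.deleteVerts {v}

/-- A vertex is good w.r.t. a wedge-selection `σ` if it is minimal in the
improvement order. -/
def GoodVertex (G : SimpleGraph V) (I : Set V) (σ : V → G.Subgraph) (u : V) : Prop :=
  u ∈ I ∧ ∀ x ∈ I, ¬ Improves G (σ x) x (σ u) u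


namespace CobAux

variable {X : Type*} {H : SimpleGraph X}

lemma getVert_eq_getElem {u v : X} (p : H.Walk u v) {i : ℕ} (hi : i ≤ p.length) :
    p.getVert i = p.support[i]'(by simp [Walk.length_support]; omega) := by
  induction p generalizing i with
  | nil =>
    have : i = 0 := by simpa using hi
    subst this; simp [Walk.getVert]
  | cons h q ih =>
    cases i with
    | zero => simp [Walk.getVert]
    | succ j =>
      simp only [Walk.support_cons, Walk.getVert_cons_succ, List.getElem_cons_succ]
      exact ih (by simpa using hi)

lemma pathInj {u v : X} {p : H.Walk u v} (hp : p.IsPath) {i j : ℕ}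
    (hi : i ≤ p.length) (hj : j ≤ p.length) (h : p.getVert i = p.getVert j) : i = j := by
  rw [getVert_eq_getElem p hi, getVert_eq_getElem p hj] at h
  exact (List.Nodup.getElem_inj_iff hp.support_nodup).mp h

lemma edge_getVert_mem {u v : X} (p : H.Walk u v) {i : ℕ} (hi : i < p.length) :
    s(p.getVert i, p.getVert (i+1)) ∈ p.edges := by
  induction p generalizing i with
  | nil => simp at hi
  | cons h q ih =>
    cases i with
    | zero =>
      simp [Walk.getVert_zero, Walk.getVert_cons_succ, Walk.edges_cons]
    | succ j =>
      simp only [Walk.getVert_cons_succ, Walk.edges_cons]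
      exact List.mem_cons_of_mem _ (ih (by simpa using hi))

lemma exists_index_of_mem_edges {u v : X} {p : H.Walk u v} {e : Sym2 X} (he : e ∈ p.edges) :
    ∃ i < p.length, e = s(p.getVert i, p.getVert (i+1)) := by
  induction p with
  | nil => simp at he
  | cons h q ih =>
    rw [Walk.edges_cons, List.mem_cons] at he
    rcases he with he | he
    · exact ⟨0, by simp, by simpa [Walk.getVert_zero, Walk.getVert_cons_succ] using he⟩
    · obtain ⟨i, hi, hei⟩ := ih he
      refine ⟨i + 1, by simp only [Walk.length_cons]; omega, by simpa [Walk.getVert_cons_succ] using hei⟩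

lemma end_mem_tail_support {u v : X} (p : H.Walk u v) (hn : ¬ p.Nil) : v ∈ p.support.tail := by
  cases p with
  | nil => simp at hn
  | cons h q => simpa using q.end_mem_support

lemma mem_support_iff_mem_tail {v y : X} (p : H.Walk v v) (hn : ¬ p.Nil) :
    y ∈ p.support ↔ y ∈ p.support.tail := by
  constructor
  · intro hy
    rw [p.support_eq_cons, List.mem_cons] at hy
    rcases hy with rfl | hy
    · exact end_mem_tail_support p hn
    · exact hy
  · intro hy
    rw [p.support_eq_cons, List.mem_cons]; exact Or.inr hy

lemma cycleInj {v : X} {p : H.Walk v v} (hp : p.IsCycle) {i j : ℕ}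
    (hi : i ≤ p.length - 1) (hj : j ≤ p.length - 1) (h : p.getVert i = p.getVert j) : i = j := by
  have hM := hp.three_le_length
  have hlen : p.support.tail.length = p.length := by
    rw [List.length_tail, p.length_support]
    omega
  have htail : ∀ (t : ℕ) (_ : 1 ≤ t) (ht2 : t ≤ p.length),
      p.getVert t = p.support.tail[t-1]'(by omega) := by
    intro t ht1 ht2
    rw [getVert_eq_getElem p ht2]
    have h1 : t - 1 + 1 = t := by omega
    rw [List.getElem_tail]
    simp [h1]
  have hnd := hp.support_nodup
  by_contra hne
  rcases Nat.eq_zero_or_pos i with rfl | hi1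
  · rcases Nat.eq_zero_or_pos j with rfl | hj1
    · exact hne rfl
    · have h0 : p.getVert 0 = p.getVert p.length := by
        rw [p.getVert_zero, p.getVert_length]
      rw [h0, htail p.length (by omega) le_rfl, htail j hj1 (by omega)] at h
      have := (List.Nodup.getElem_inj_iff hnd).mp h
      omega
  · rcases Nat.eq_zero_or_pos j with rfl | hj1
    · have h0 : p.getVert 0 = p.getVert p.length := by
        rw [p.getVert_zero, p.getVert_length]
      rw [h0, htail p.length (by omega) le_rfl, htail i hi1 (by omega)] at h
      have := (List.Nodup.getElem_inj_iff hnd).mp h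
      omega
    · rw [htail i hi1 (by omega), htail j hj1 (by omega)] at h
      have := (List.Nodup.getElem_inj_iff hnd).mp h
      omega

lemma mem_of_walk_closed {S : Set X} (hcl : ∀ y ∈ S, ∀ z, H.Adj y z → z ∈ S) {a b : X}
    (h : H.Walk a b) (ha : a ∈ S) : b ∈ S := by
  induction h with
  | nil => exact ha
  | cons hadj q ih => exact ih (hcl _ ha _ hadj)

lemma edge_start_of_path {u v y : X} {p : H.Walk u v} (hp : p.IsPath)
    (he : s(u, y) ∈ p.edges) : y = p.getVert 1 := by
  obtain ⟨i, hi, hei⟩ := exists_index_of_mem_edges he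
  rw [Sym2.eq_iff] at hei
  rcases hei with ⟨h1, h2⟩ | ⟨h1, h2⟩
  · have : i = 0 := pathInj hp (by omega) (by omega) (by rw [← h1, p.getVert_zero])
    subst this; rw [h2]
  · have : i + 1 = 0 := pathInj hp (by omega) (by omega)
      (by rw [← h1]; exact p.getVert_zero.symm)
    omega

theorem exists_ham_cycle [Fintype X] (hconn : H.Connected)
    (hreg : ∀ x : X, (H.neighborSet x).ncard = 2) :
    ∃ (x0 : X) (ω : H.Walk x0 x0), ω.IsCycle ∧ (∀ y, y ∈ ω.support) ∧
      ∀ ⦃a b⦄, H.Adj a b → s(a, b) ∈ ω.edges := by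
  classical
  obtain ⟨x0⟩ := hconn.nonempty
  have hbdd : BddAbove {L | ∃ (a : X) (b : X) (p : H.Walk a b), p.IsPath ∧ p.length = L} := by
    refine ⟨Fintype.card X, ?_⟩
    rintro L ⟨a, b, p, hp, rfl⟩
    exact le_of_lt hp.length_lt
  obtain ⟨a, b, p, hp, hpl⟩ :=
    Nat.sSup_mem (s := {L | ∃ (a : X) (b : X) (p : H.Walk a b), p.IsPath ∧ p.length = L})
      ⟨0, x0, x0, Walk.nil, by simp, rfl⟩ hbdd
  have hmax : ∀ {a' b' : X} (q : H.Walk a' b'), q.IsPath → q.length ≤ p.length := by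
    intro a' b' q hq
    rw [hpl]
    exact le_csSup hbdd ⟨a', b', q, hq, rfl⟩
  clear hpl
  have hnbr_sup : ∀ y, H.Adj a y → y ∈ p.support := by
    intro y hy
    by_contra hns
    have : (p.cons hy.symm).IsPath := by
      rw [Walk.cons_isPath_iff]; exact ⟨hp, hns⟩
    have hle := hmax _ this
    simp at hle
  obtain ⟨y1, y2, hy12, hset⟩ := Set.ncard_eq_two.mp (hreg a)
  have hy1 : H.Adj a y1 := by
    have : y1 ∈ H.neighborSet a := by rw [hset]; simp
    exact this
  have hy2 : H.Adj a y2 := by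
    have : y2 ∈ H.neighborSet a := by rw [hset]; simp
    exact this
  obtain ⟨j1, hj1v, hj1⟩ := Walk.mem_support_iff_exists_getVert.mp (hnbr_sup y1 hy1)
  obtain ⟨j2, hj2v, hj2⟩ := Walk.mem_support_iff_exists_getVert.mp (hnbr_sup y2 hy2)
  have hj1pos : 0 < j1 := by
    rcases Nat.eq_zero_or_pos j1 with hz | h
    · subst hz; rw [p.getVert_zero] at hj1v; subst hj1v; exact absurd hy1 (H.irrefl)
    · exact h
  have hj2pos : 0 < j2 := by
    rcases Nat.eq_zero_or_pos j2 with hz | h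
    · subst hz; rw [p.getVert_zero] at hj2v; subst hj2v; exact absurd hy2 (H.irrefl)
    · exact h
  have hjne : j1 ≠ j2 := by
    intro hjj; exact hy12 (by rw [← hj1v, ← hj2v, hjj])
  have hL2 : 2 ≤ p.length := by omega
  have hinterior : ∀ (j : ℕ) (y : X), H.Adj a y → p.getVert j = y → 2 ≤ j → j ≤ p.length →
      j = p.length := by
    intro j y hay hjy hj2' hjL
    by_contra hne
    have hadj1 : H.Adj y (p.getVert (j-1)) := by
      have := p.adj_getVert_succ (i := j - 1) (by omega)
      have hj' : j - 1 + 1 = j := by omega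
      rw [hj'] at this; rw [← hjy]; exact this.symm
    have hadj2 : H.Adj y (p.getVert (j+1)) := by
      have := p.adj_getVert_succ (i := j) (by omega)
      rw [← hjy]; exact this
    have hsub : ({p.getVert (j-1), p.getVert (j+1), a} : Set X) ⊆ H.neighborSet y := by
      rintro z (rfl | rfl | rfl)
      · exact hadj1
      · exact hadj2
      · exact hay.symm
    have hcard3 : ({p.getVert (j-1), p.getVert (j+1), a} : Set X).ncard = 3 := by
      rw [Set.ncard_eq_three]
      refine ⟨_, _, _, ?_, ?_, ?_, rfl⟩
      · intro hh
        have := pathInj hp (i := j-1) (j := j+1) (by omega) (by omega) hh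
        omega
      · intro hh
        have : p.getVert (j-1) = p.getVert 0 := by rw [p.getVert_zero]; exact hh
        have := pathInj hp (i := j-1) (j := 0) (by omega) (by omega) this
        omega
      · intro hh
        have : p.getVert (j+1) = p.getVert 0 := by rw [p.getVert_zero]; exact hh
        have := pathInj hp (i := j+1) (j := 0) (by omega) (by omega) this
        omega
    have hle := Set.ncard_le_ncard hsub (Set.toFinite _)
    rw [hcard3, hreg y] at hle
    omega
  have hab : H.Adj a b := by
    rcases Nat.lt_or_ge j1 j2 with hlt | hge
    · have := hinterior j2 y2 hy2 hj2v (by omega) hj2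
      subst this
      have : y2 = b := by rw [← hj2v, p.getVert_length]
      rw [← this]; exact hy2
    · have hj1big : 2 ≤ j1 := by omega
      have := hinterior j1 y1 hy1 hj1v hj1big hj1
      subst this
      have : y1 = b := by rw [← hj1v, p.getVert_length]
      rw [← this]; exact hy1
  have hnotedge : s(a, b) ∉ p.edges := by
    intro he
    have hb1 := edge_start_of_path hp he
    have hb : p.getVert p.length = p.getVert 1 := by rw [← hb1, p.getVert_length]
    have := pathInj hp (by omega) (by omega) hb
    omega
  set ω : H.Walk a a := Walk.cons hab p.reverse with hω
  have hcyc : ω.IsCycle := by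
    rw [hω, Walk.cons_isCycle_iff]
    refine ⟨hp.reverse, ?_⟩
    rw [Walk.edges_reverse, List.mem_reverse]
    exact hnotedge
  have homega_len : ω.length = p.length + 1 := by
    rw [hω]; simp
  have hMge : 3 ≤ ω.length := hcyc.three_le_length
  -- neighbourhood structure along the cycle
  have hnbr : ∀ y ∈ ω.support, (∀ z, H.Adj y z → z ∈ ω.support ∧ s(y, z) ∈ ω.edges) := by
    intro y hy
    obtain ⟨j, hjv, hjle⟩ := Walk.mem_support_iff_exists_getVert.mp hy
    -- normalize j < ω.length
    have hnorm : ∃ j' < ω.length, ω.getVert j' = y := by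
      rcases Nat.lt_or_ge j ω.length with h | h
      · exact ⟨j, h, hjv⟩
      · refine ⟨0, by omega, ?_⟩
        rw [ω.getVert_zero, ← hjv, ω.getVert_of_length_le h]

    obtain ⟨i, hilt, hiv⟩ := hnorm
    set prevIdx : ℕ := if i = 0 then ω.length - 1 else i - 1 with hpi
    have hprevle : prevIdx ≤ ω.length := by rw [hpi]; split <;> omega
    have hprev_edge : s(ω.getVert prevIdx, y) ∈ ω.edges := by
      rcases Nat.eq_zero_or_pos i with hz | hpos
      · have : prevIdx = ω.length - 1 := by rw [hpi, hz]; simp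
        rw [this]
        have he := edge_getVert_mem ω (i := ω.length - 1) (by omega)
        have h1 : ω.length - 1 + 1 = ω.length := by omega
        rw [h1, ω.getVert_length] at he
        have : y = a := by rw [← hiv, hz, ω.getVert_zero]
        rw [this]; exact he
      · have : prevIdx = i - 1 := by rw [hpi]; simp [Nat.pos_iff_ne_zero.mp hpos]
        rw [this]
        have he := edge_getVert_mem ω (i := i - 1) (by omega)
        have h1 : i - 1 + 1 = i := by omega
        rw [h1, hiv] at he
        exact he
    have hsucc_edge : s(y, ω.getVert (i+1)) ∈ ω.edges := by
      have he := edge_getVert_mem ω (i := i) hilt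
      rw [hiv] at he
      exact he
    have hprev_adj : H.Adj y (ω.getVert prevIdx) := (Walk.adj_of_mem_edges ω hprev_edge).symm
    have hsucc_adj : H.Adj y (ω.getVert (i+1)) := Walk.adj_of_mem_edges ω hsucc_edge
    have hne : ω.getVert prevIdx ≠ ω.getVert (i+1) := by
      intro hcontra
      rcases Nat.eq_zero_or_pos i with hz | hpos
      · have hp1 : prevIdx = ω.length - 1 := by rw [hpi, hz]; simp
        rw [hp1, hz] at hcontra
        have := cycleInj hcyc (i := ω.length - 1) (j := 1) (by omega) (by omega) hcontra
        omega
      · have hp1 : prevIdx = i - 1 := by rw [hpi]; simp [Nat.pos_iff_ne_zero.mp hpos]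
        rw [hp1] at hcontra
        rcases Nat.lt_or_ge (i+1) ω.length with hlt | hge
        · have := cycleInj hcyc (i := i - 1) (j := i+1) (by omega) (by omega) hcontra
          omega
        · -- i + 1 = ω.length
          have hieq : i + 1 = ω.length := by omega
          have : ω.getVert (i+1) = ω.getVert 0 := by
            rw [hieq, ω.getVert_length, ω.getVert_zero]
          rw [this] at hcontra
          have := cycleInj hcyc (i := i - 1) (j := 0) (by omega) (by omega) hcontra
          omega
    have hnbrset : H.neighborSet y = {ω.getVert prevIdx, ω.getVert (i+1)} := by
      refine (Set.eq_of_subset_of_ncard_le ?_ ?_ (Set.toFinite _)).symm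
      · rintro z (rfl | rfl)
        · exact hprev_adj
        · exact hsucc_adj
      · rw [hreg y, Set.ncard_pair hne]
    intro z hz
    have hzmem : z ∈ ({ω.getVert prevIdx, ω.getVert (i+1)} : Set X) := by
      rw [← hnbrset]; exact hz
    rcases hzmem with rfl | rfl
    · constructor
      · exact Walk.mem_support_iff_exists_getVert.mpr ⟨prevIdx, rfl, hprevle⟩
      · rw [Sym2.eq_swap]; exact hprev_edge
    · constructor
      · exact Walk.mem_support_iff_exists_getVert.mpr ⟨i+1, rfl, by omega⟩
      · exact hsucc_edge
  have hcover : ∀ y, y ∈ ω.support := by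
    intro y
    obtain ⟨q⟩ := hconn.preconnected a y
    exact mem_of_walk_closed (fun y' hy' z hz => (hnbr y' hy' z hz).1) q ω.start_mem_support
  exact ⟨a, ω, hcyc, hcover, fun a' b' hab' => (hnbr a' (hcover a') b' hab').2⟩

section ArcTheory

variable {V : Type} (G : SimpleGraph V)

/-- The arc subgraph from `f s` to `f (s+m)` along the cyclic order given by `f`. -/
def Arc (n : ℕ) (f : ZMod n → V) (s : ZMod n) (m : ℕ) : G.Subgraph where
  verts := {x | ∃ j : ℕ, j ≤ m ∧ x = f (s + j)}
  Adj a b := (∃ j : ℕ, j < m ∧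
      ((a = f (s + j) ∧ b = f (s + (j+1 : ℕ))) ∨ (b = f (s + j) ∧ a = f (s + (j+1 : ℕ))))) ∧
    G.Adj a b
  adj_sub h := h.2
  edge_vert h := by
    obtain ⟨⟨j, hj, hor⟩, -⟩ := h
    rcases hor with ⟨rfl, -⟩ | ⟨-, rfl⟩
    · exact ⟨j, le_of_lt hj, rfl⟩
    · exact ⟨j + 1, by omega, rfl⟩
  symm := ⟨fun a b h => by
    obtain ⟨⟨j, hj, hor⟩, hG⟩ := h
    refine ⟨⟨j, hj, ?_⟩, hG.symm⟩
    rcases hor with h' | h'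
    · exact Or.inr h'
    · exact Or.inl h'⟩

variable {G}

lemma arc_verts_mem {n : ℕ} {f : ZMod n → V} {s : ZMod n} {m j : ℕ} (hj : j ≤ m) :
    f (s + j) ∈ (Arc G n f s m).verts := ⟨j, hj, rfl⟩

lemma arc_adj {n : ℕ} {f : ZMod n → V} (hadjD : ∀ i : ZMod n, G.Adj (f i) (f (i+1)))
    {s : ZMod n} {m j : ℕ} (hj : j < m) :
    (Arc G n f s m).Adj (f (s + j)) (f (s + (j+1 : ℕ))) := by
  refine ⟨⟨j, hj, Or.inl ⟨rfl, rfl⟩⟩, ?_⟩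
  have := hadjD (s + j)
  have hcast : s + ((j+1 : ℕ) : ZMod n) = s + j + 1 := by push_cast; ring
  rw [hcast]
  exact this

lemma arc_le {n : ℕ} {f : ZMod n → V} {s s' : ZMod n} {m m' : ℕ} (hm : 1 ≤ m)
    (h : ∀ j < m, ∃ j' < m', s + (j : ZMod n) = s' + (j' : ZMod n)) :
    Arc G n f s m ≤ Arc G n f s' m' := by
  constructor
  · rintro x ⟨j, hj, rfl⟩
    rcases Nat.lt_or_ge j m with hlt | hge
    · obtain ⟨j', hj', he⟩ := h j hlt
      exact ⟨j', le_of_lt hj', by rw [he]⟩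
    · have hjm : j = m := by omega
      obtain ⟨j', hj', he⟩ := h (m - 1) (by omega)
      refine ⟨j' + 1, by omega, ?_⟩
      rw [hjm]
      have h1 : s + (m : ZMod n) = (s + ((m-1 : ℕ) : ZMod n)) + 1 := by
        have h2 : (m - 1) + 1 = m := by omega
        have : ((m : ℕ) : ZMod n) = ((m - 1 : ℕ) : ZMod n) + 1 := by
          rw [← h2]; push_cast; ring
        rw [this]; ring
      have h3 : s' + ((j' + 1 : ℕ) : ZMod n) = (s' + (j' : ZMod n)) + 1 := by push_cast; ring
      rw [h1, h3, he]
  · rintro a b ⟨⟨j, hj, hor⟩, hG⟩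
    obtain ⟨j', hj', he⟩ := h j hj
    have he' : s + ((j+1 : ℕ) : ZMod n) = s' + ((j'+1 : ℕ) : ZMod n) := by
      push_cast
      rw [← add_assoc, ← add_assoc]
      exact congrArg (fun z => z + 1) he
    exact ⟨⟨j', hj', by rw [he, he'] at hor; exact hor⟩, hG⟩

end ArcTheory

lemma arc_reach {n : ℕ} {f : ZMod n → V} (hadjD : ∀ i : ZMod n, G.Adj (f i) (f (i+1)))
    {s : ZMod n} {m : ℕ} {j : ℕ} (hj : j ≤ m) :
    (Arc G n f s m).coe.Reachable ⟨f (s + (0:ℕ)), arc_verts_mem (by omega)⟩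
      ⟨f (s + (j : ℕ)), arc_verts_mem hj⟩ := by
  induction j with
  | zero => exact Reachable.refl _
  | succ jj ih =>
    refine (ih (by omega)).trans ?_
    have hadj := arc_adj (G := G) hadjD (s := s) (m := m) (j := jj) (by omega)
    exact (Subgraph.Adj.coe hadj).reachable

lemma arc_connected {n : ℕ} {f : ZMod n → V} (hadjD : ∀ i : ZMod n, G.Adj (f i) (f (i+1)))
    {s : ZMod n} {m : ℕ} : (Arc G n f s m).coe.Connected := by
  rw [connected_iff]
  constructor
  · rintro ⟨a, ja, hja, rfl⟩ ⟨b, jb, hjb, rfl⟩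
    exact (arc_reach hadjD hja).symm.trans (arc_reach hadjD hjb)
  · exact ⟨⟨f (s + (0:ℕ)), arc_verts_mem (by omega)⟩⟩

lemma cyclewalk_arc {n : ℕ} (hn3 : 3 ≤ n) {f : ZMod n → V} (hinj : Function.Injective f)
    (hadjC : ∀ i j : ZMod n, G.Adj (f i) (f j) ↔ j = i + 1 ∨ i = j + 1)
    {W : G.Subgraph} {x : V} (hx : x ∈ W.verts)
    (hCsub : ∀ y ∈ W.verts, y ≠ x → ∃ i : ZMod n, f i = y)
    (ω : W.coe.Walk ⟨x, hx⟩ ⟨x, hx⟩) (hcyc : ω.IsCycle)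
    (hcover : ∀ y : W.verts, y ∈ ω.support)
    (hcomp : ∀ ⦃a b : W.verts⦄, W.coe.Adj a b → s(a, b) ∈ ω.edges)
    (hfirst : ∃ i : ZMod n, f i = ((ω.getVert 1 : W.verts) : V) ∧
      f (i+1) = ((ω.getVert 2 : W.verts) : V)) :
    ∃ (s : ZMod n) (m : ℕ), 1 ≤ m ∧ m ≤ n - 1 ∧
      W.deleteVerts {x} = Arc G n f s m ∧ W.Adj x (f s) ∧ W.Adj x (f (s + (m : ℕ))) := by
  haveI : NeZero n := ⟨by omega⟩
  have hM3 : 3 ≤ ω.length := hcyc.three_le_length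
  have hadjD : ∀ i : ZMod n, G.Adj (f i) (f (i+1)) := fun i => (hadjC i (i+1)).mpr (Or.inl rfl)
  have hgx : ∀ j, 1 ≤ j → j ≤ ω.length - 1 → ((ω.getVert j : W.verts) : V) ≠ x := by
    intro j h1 h2 hcon
    have he : ω.getVert j = ω.getVert 0 := by
      rw [ω.getVert_zero]; exact Subtype.ext hcon
    have := cycleInj hcyc (by omega) (by omega) he
    omega
  have hex : ∀ j : ℕ, ∃ i : ZMod n, (1 ≤ j → j ≤ ω.length - 1 → f i = ((ω.getVert j : W.verts) : V)) := by
    intro j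
    by_cases h1 : 1 ≤ j ∧ j ≤ ω.length - 1
    · obtain ⟨i, hi⟩ := hCsub _ (ω.getVert j).2 (hgx j h1.1 h1.2)
      exact ⟨i, fun _ _ => hi⟩
    · exact ⟨0, fun ha hb => absurd ⟨ha, hb⟩ h1⟩
  choose t ht using hex
  have hstep : ∀ j, 1 ≤ j → j + 1 ≤ ω.length - 1 → t (j+1) = t j + 1 ∨ t j = t (j+1) + 1 := by
    intro j h1 h2
    have hadj : G.Adj ((ω.getVert j : W.verts) : V) ((ω.getVert (j+1) : W.verts) : V) :=
      W.coe_adj_sub _ _ (ω.adj_getVert_succ (by omega))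
    rw [← ht j h1 (by omega), ← ht (j+1) (by omega) h2] at hadj
    exact (hadjC _ _).mp hadj
  have ht2 : t 2 = t 1 + 1 := by
    obtain ⟨i, hi1, hi2⟩ := hfirst
    have e1 : t 1 = i := hinj (by rw [ht 1 (by omega) (by omega), hi1])
    have e2 : t 2 = i + 1 := hinj (by rw [ht 2 (by omega) (by omega), hi2])
    rw [e1, e2]
  have hasc : ∀ j, 1 ≤ j → j + 1 ≤ ω.length - 1 → t (j+1) = t j + 1 := by
    intro j
    induction j with
    | zero => intro h; exact absurd h (by omega)
    | succ jj ih =>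
      intro _ hle
      rcases Nat.eq_zero_or_pos jj with rfl | hjj
      · exact ht2
      · have ihv := ih (by omega) (by omega)
        rcases hstep (jj+1) (by omega) hle with h | h
        · exact h
        · exfalso
          rw [ihv] at h
          have hteq : t (jj + 1 + 1) = t jj := by
            have := h.symm
            exact add_right_cancel this
          have hveq : ((ω.getVert (jj+2) : W.verts) : V) = ((ω.getVert jj : W.verts) : V) := by
            rw [← ht (jj+2) (by omega) (by omega), ← ht jj (by omega) (by omega)]
            exact congrArg f hteq
          have := cycleInj hcyc (i := jj+2) (j := jj) (by omega) (by omega) (Subtype.ext hveq)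
          omega
  have hts : ∀ j, 1 ≤ j → j ≤ ω.length - 1 → t j = t 1 + ((j - 1 : ℕ) : ZMod n) := by
    intro j
    induction j with
    | zero => intro h; exact absurd h (by omega)
    | succ jj ih =>
      intro _ hle
      rcases Nat.eq_zero_or_pos jj with rfl | hjj
      · simp
      · have ihv := ih (by omega) (by omega)
        have hstepv := hasc jj (by omega) (by omega)
        rw [hstepv, ihv]
        have hc : ((jj + 1 - 1 : ℕ) : ZMod n) = ((jj - 1 : ℕ) : ZMod n) + 1 := by
          have h1 : jj + 1 - 1 = (jj - 1) + 1 := by omega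
          rw [h1]; push_cast; ring
        rw [hc]; ring
  have hgv : ∀ j, j ≤ ω.length - 2 → ((ω.getVert (j+1) : W.verts) : V) = f (t 1 + (j : ZMod n)) := by
    intro j hj
    rw [← ht (j+1) (by omega) (by omega), hts (j+1) (by omega) (by omega)]
    simp
  have hm1 : 1 ≤ ω.length - 2 := by omega
  have hmn : ω.length - 2 ≤ n - 1 := by
    by_contra hcon
    have hnm : n ≤ ω.length - 2 := by omega
    have hveq : ((ω.getVert (0+1) : W.verts) : V) = ((ω.getVert (n+1) : W.verts) : V) := by
      rw [hgv 0 (by omega), hgv n hnm]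
      rw [Nat.cast_zero, ZMod.natCast_self]
    have := cycleInj hcyc (i := 1) (j := n+1) (by omega) (by omega) (Subtype.ext hveq)
    omega
  refine ⟨t 1, ω.length - 2, hm1, hmn, ?_, ?_, ?_⟩
  · refine Subgraph.ext ?_ ?_
    · rw [Subgraph.deleteVerts_verts]
      ext y
      constructor
      · rintro ⟨hyW, hyx⟩
        have hYne : y ≠ x := by simpa using hyx
        obtain ⟨j, hjv, hjle⟩ := Walk.mem_support_iff_exists_getVert.mp (hcover ⟨y, hyW⟩)
        have hyval : ((ω.getVert j : W.verts) : V) = y := by rw [hjv]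
        have hj1 : 1 ≤ j := by
          rcases Nat.eq_zero_or_pos j with rfl | h
          · rw [ω.getVert_zero] at hyval; exact absurd hyval.symm hYne
          · exact h
        have hjM : j ≤ ω.length - 1 := by
          rcases Nat.lt_or_ge j ω.length with h | h
          · omega
          · exfalso
            have : ω.getVert j = ⟨x, hx⟩ := ω.getVert_of_length_le h
            rw [this] at hyval
            exact hYne hyval.symm
        refine ⟨j - 1, by omega, ?_⟩
        rw [← hgv (j-1) (by omega)]
        have hj' : j - 1 + 1 = j := by omega
        rw [hj', hyval]
      · rintro ⟨j, hj, rfl⟩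
        refine ⟨?_, ?_⟩
        · rw [← hgv j hj]; exact (ω.getVert (j+1)).2
        · simp only [Set.mem_singleton_iff]
          intro hcon
          rw [← hgv j hj] at hcon
          exact hgx (j+1) (by omega) (by omega) hcon
    · funext a b
      apply propext
      rw [Subgraph.deleteVerts_adj]
      constructor
      · rintro ⟨haW, hax, hbW, hbx, hab⟩
        simp only [Set.mem_singleton_iff] at hax hbx
        have hcoe : W.coe.Adj ⟨a, haW⟩ ⟨b, hbW⟩ := hab
        have hedge := hcomp hcoe
        obtain ⟨i, hilt, hie⟩ := exists_index_of_mem_edges hedge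
        have hi1 : 1 ≤ i ∧ i + 1 ≤ ω.length - 1 := by
          constructor
          · rcases Nat.eq_zero_or_pos i with rfl | h
            · exfalso
              rw [Sym2.eq_iff] at hie
              rcases hie with ⟨h1, h2⟩ | ⟨h1, h2⟩
              · rw [ω.getVert_zero] at h1
                exact hax (congrArg Subtype.val h1.symm).symm
              · rw [ω.getVert_zero] at h2
                exact hbx (congrArg Subtype.val h2.symm).symm
            · exact h
          · rcases Nat.lt_or_ge (i+1) ω.length with h | h
            · omega
            · exfalso
              have hieq : i + 1 = ω.length := by omega
              have hgl : ω.getVert (i+1) = ⟨x, hx⟩ := by rw [hieq]; exact ω.getVert_length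
              rw [Sym2.eq_iff] at hie
              rcases hie with ⟨h1, h2⟩ | ⟨h1, h2⟩
              · rw [hgl] at h2
                exact hbx (congrArg Subtype.val h2.symm).symm
              · rw [hgl] at h1
                exact hax (congrArg Subtype.val h1.symm).symm
        rw [Sym2.eq_iff] at hie
        have hiv : ∀ jj, jj ≤ ω.length - 2 → ((ω.getVert (jj+1) : W.verts) : V) = f (t 1 + (jj : ZMod n)) := hgv
        refine ⟨⟨i - 1, by omega, ?_⟩, W.adj_sub hab⟩
        have hi1' : i - 1 + 1 = i := by omega
        have hi2' : i - 1 + 1 + 1 = i + 1 := by omega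
        have hva : ((ω.getVert i : W.verts) : V) = f (t 1 + ((i-1 : ℕ) : ZMod n)) := by
          rw [← hiv (i-1) (by omega), hi1']
        have hvb : ((ω.getVert (i+1) : W.verts) : V) = f (t 1 + ((i-1+1 : ℕ) : ZMod n)) := by
          rw [← hiv (i-1+1) (by omega), hi2']
        rcases hie with ⟨h1, h2⟩ | ⟨h1, h2⟩
        · left
          exact ⟨by rw [← hva]; exact congrArg Subtype.val h1,
            by rw [← hvb]; exact congrArg Subtype.val h2⟩
        · right
          exact ⟨by rw [← hva]; exact congrArg Subtype.val h2,
            by rw [← hvb]; exact congrArg Subtype.val h1⟩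
      · rintro ⟨⟨j, hj, hor⟩, hG⟩
        have hadjcoe : W.coe.Adj (ω.getVert (j+1)) (ω.getVert (j+2)) :=
          ω.adj_getVert_succ (i := j+1) (by omega)
        have hWadj : W.Adj ((ω.getVert (j+1) : W.verts) : V) ((ω.getVert (j+2) : W.verts) : V) :=
          hadjcoe
        have hva : ((ω.getVert (j+1) : W.verts) : V) = f (t 1 + (j : ZMod n)) := hgv j (by omega)
        have hvb : ((ω.getVert (j+2) : W.verts) : V) = f (t 1 + ((j+1 : ℕ) : ZMod n)) :=
          hgv (j+1) (by omega)
        have hmema : f (t 1 + (j : ZMod n)) ∈ W.verts := by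
          rw [← hva]; exact (ω.getVert (j+1)).2
        have hmemb : f (t 1 + ((j+1:ℕ) : ZMod n)) ∈ W.verts := by
          rw [← hvb]; exact (ω.getVert (j+2)).2
        have hnea : f (t 1 + (j : ZMod n)) ≠ x := by
          rw [← hva]; exact hgx (j+1) (by omega) (by omega)
        have hneb : f (t 1 + ((j+1:ℕ) : ZMod n)) ≠ x := by
          rw [← hvb]; exact hgx (j+2) (by omega) (by omega)
        rcases hor with ⟨rfl, rfl⟩ | ⟨rfl, rfl⟩
        · exact ⟨hmema, by simpa using hnea, hmemb, by simpa using hneb, by rw [← hva, ← hvb]; exact hWadj⟩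
        · exact ⟨hmemb, by simpa using hneb, hmema, by simpa using hnea, by rw [← hva, ← hvb]; exact hWadj.symm⟩
  · have hadjcoe : W.coe.Adj (ω.getVert 0) (ω.getVert 1) := ω.adj_getVert_succ (by omega)
    have hWadj : W.Adj ((ω.getVert 0 : W.verts) : V) ((ω.getVert 1 : W.verts) : V) := hadjcoe
    rw [ω.getVert_zero] at hWadj
    have hv1 : ((ω.getVert (0+1) : W.verts) : V) = f (t 1 + ((0:ℕ) : ZMod n)) := hgv 0 (by omega)
    simp only [Nat.cast_zero, add_zero] at hv1
    rw [← hv1]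
    exact hWadj
  · have hadjcoe : W.coe.Adj (ω.getVert (ω.length - 1)) (ω.getVert ω.length) :=
      by
        have := ω.adj_getVert_succ (i := ω.length - 1) (by omega)
        have h1 : ω.length - 1 + 1 = ω.length := by omega
        rw [h1] at this
        exact this
    have hWadj : W.Adj ((ω.getVert (ω.length - 1) : W.verts) : V) ((ω.getVert ω.length : W.verts) : V) := hadjcoe
    rw [ω.getVert_length] at hWadj
    have hv1 : ((ω.getVert (ω.length - 2 + 1) : W.verts) : V) = f (t 1 + ((ω.length - 2 : ℕ) : ZMod n)) :=
      hgv (ω.length - 2) (by omega)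
    have h1 : ω.length - 2 + 1 = ω.length - 1 := by omega
    rw [h1] at hv1
    rw [← hv1]
    exact hWadj.symm

lemma arc_neg {n : ℕ} {f : ZMod n → V} {s : ZMod n} {m : ℕ} :
    Arc G n (fun i => f (-i)) s m = Arc G n f (-s - (m:ℕ)) m := by
  refine Subgraph.ext ?_ ?_
  · ext y
    constructor
    · rintro ⟨j, hj, rfl⟩
      refine ⟨m - j, by omega, ?_⟩
      have hc : ((m - j : ℕ) : ZMod n) = (m : ZMod n) - (j : ZMod n) := by
        have h1 : (m - j) + j = m := by omega
        have h2 : (((m - j) + j : ℕ) : ZMod n) = (m : ZMod n) := by rw [h1]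
        push_cast at h2
        linear_combination h2
      rw [hc]
      ring_nf
    · rintro ⟨j, hj, rfl⟩
      refine ⟨m - j, by omega, ?_⟩
      have hc : ((m - j : ℕ) : ZMod n) = (m : ZMod n) - (j : ZMod n) := by
        have h1 : (m - j) + j = m := by omega
        have h2 : (((m - j) + j : ℕ) : ZMod n) = (m : ZMod n) := by rw [h1]
        push_cast at h2
        linear_combination h2
      rw [hc]
      ring_nf
  · funext a b
    apply propext
    have key : ∀ j : ℕ, j < m →
        (-(s + (j:ZMod n)) = (-s - (m:ℕ)) + ((m - 1 - j : ℕ) + 1 : ℕ) ∧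
         -(s + ((j+1:ℕ):ZMod n)) = (-s - (m:ℕ)) + ((m - 1 - j : ℕ) : ℕ)) := by
      intro j hj
      have h1 : (m - 1 - j) + 1 + j = m := by omega
      have h2 : ((((m - 1 - j) + 1 + j : ℕ)) : ZMod n) = (m : ZMod n) := by rw [h1]
      push_cast at h2 ⊢
      constructor
      · linear_combination -h2
      · linear_combination -h2
    constructor
    · rintro ⟨⟨j, hj, hor⟩, hG⟩
      refine ⟨⟨m - 1 - j, by omega, ?_⟩, hG⟩
      obtain ⟨k1, k2⟩ := key j hj
      rcases hor with ⟨ha, hb⟩ | ⟨ha, hb⟩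
      · right
        exact ⟨by rw [hb]; exact congrArg f k2, by rw [ha]; exact congrArg f k1⟩
      · left
        exact ⟨by rw [hb]; exact congrArg f k2, by rw [ha]; exact congrArg f k1⟩
    · rintro ⟨⟨j', hj', hor⟩, hG⟩
      refine ⟨⟨m - 1 - j', by omega, ?_⟩, hG⟩
      obtain ⟨k1, k2⟩ := key (m - 1 - j') (by omega)
      have hjj : m - 1 - (m - 1 - j') = j' := by omega
      rw [hjj] at k1 k2
      rcases hor with ⟨ha, hb⟩ | ⟨ha, hb⟩
      · right
        exact ⟨by rw [hb]; exact (congrArg f k1).symm, by rw [ha]; exact (congrArg f k2).symm⟩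
      · left
        exact ⟨by rw [hb]; exact (congrArg f k1).symm, by rw [ha]; exact (congrArg f k2).symm⟩

lemma wedge_arc [Finite V] {n : ℕ} (hn3 : 3 ≤ n) {f : ZMod n → V} (hinj : Function.Injective f)
    (hadjC : ∀ i j : ZMod n, G.Adj (f i) (f j) ↔ j = i + 1 ∨ i = j + 1)
    {W : G.Subgraph} {x : V}
    (hconn : W.coe.Connected)
    (hreg : ∀ y ∈ W.verts, (W.neighborSet y).ncard = 2)
    (hx : x ∈ W.verts)
    (hCsub : ∀ y ∈ W.verts, y ≠ x → ∃ i : ZMod n, f i = y) :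
    ∃ (s : ZMod n) (m : ℕ), 1 ≤ m ∧ m ≤ n - 1 ∧
      W.deleteVerts {x} = Arc G n f s m ∧ W.Adj x (f s) ∧ W.Adj x (f (s + (m : ℕ))) := by
  classical
  haveI : NeZero n := ⟨by omega⟩
  haveI : Fintype ↥W.verts := Fintype.ofFinite _
  have hregcoe : ∀ y : ↥W.verts, (W.coe.neighborSet y).ncard = 2 := by
    intro y
    have himg : Subtype.val '' (W.coe.neighborSet y) = W.neighborSet y.val := by
      ext z
      constructor
      · rintro ⟨⟨z', hz'⟩, hadj, rfl⟩
        exact hadj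
      · intro hz
        exact ⟨⟨z, W.edge_vert (W.adj_symm hz)⟩, hz, rfl⟩
    rw [← hreg y.val y.2, ← himg, Set.ncard_image_of_injective _ Subtype.val_injective]
  obtain ⟨x0, ω₀, hcyc0, hcover0, hcomp0⟩ := exists_ham_cycle hconn hregcoe
  have hxs : (⟨x, hx⟩ : ↥W.verts) ∈ ω₀.support := hcover0 _
  set ω := ω₀.rotate _ hxs with hω
  have hcyc : ω.IsCycle := hcyc0.rotate hxs
  have hnil0 : ¬ ω₀.Nil := by
    have := hcyc0.three_le_length
    rw [Walk.nil_iff_length_eq]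
    omega
  have hnil : ¬ ω.Nil := by
    have := hcyc.three_le_length
    rw [Walk.nil_iff_length_eq]
    omega
  have hcover : ∀ y : ↥W.verts, y ∈ ω.support := by
    intro y
    rw [mem_support_iff_mem_tail ω hnil]
    have hrot := Walk.support_rotate ω₀ _ hxs
    exact (hrot.mem_iff).mpr ((mem_support_iff_mem_tail ω₀ hnil0).mp (hcover0 y))
  have hcomp : ∀ ⦃a b : ↥W.verts⦄, W.coe.Adj a b → s(a, b) ∈ ω.edges := by
    intro a b hab
    have hrot := Walk.rotate_edges ω₀ _ hxs
    exact (hrot.mem_iff).mpr (hcomp0 hab)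
  have hM3 : 3 ≤ ω.length := hcyc.three_le_length
  have hgx : ∀ j, 1 ≤ j → j ≤ ω.length - 1 → ((ω.getVert j : ↥W.verts) : V) ≠ x := by
    intro j h1 h2 hcon
    have he : ω.getVert j = ω.getVert 0 := by
      rw [ω.getVert_zero]; exact Subtype.ext hcon
    have := cycleInj hcyc (by omega) (by omega) he
    omega
  obtain ⟨i1, hi1⟩ := hCsub _ (ω.getVert 1).2 (hgx 1 (by omega) (by omega))
  obtain ⟨i2, hi2⟩ := hCsub _ (ω.getVert 2).2 (hgx 2 (by omega) (by omega))
  have hadj12 : G.Adj ((ω.getVert 1 : ↥W.verts) : V) ((ω.getVert 2 : ↥W.verts) : V) :=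
    W.coe_adj_sub _ _ (ω.adj_getVert_succ (by omega))
  rw [← hi1, ← hi2] at hadj12
  rcases (hadjC i1 i2).mp hadj12 with h | h
  · exact cyclewalk_arc hn3 hinj hadjC hx hCsub ω hcyc hcover hcomp
      ⟨i1, hi1, by rw [← h]; exact hi2⟩
  · have hinj' : Function.Injective (fun i : ZMod n => f (-i)) := by
      intro a b hab
      have := hinj hab
      exact neg_injective this
    have hadjC' : ∀ i j : ZMod n, G.Adj (f (-i)) (f (-j)) ↔ j = i + 1 ∨ i = j + 1 := by
      intro i j
      rw [hadjC (-i) (-j)]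
      constructor
      · rintro (h' | h')
        · right; linear_combination h'
        · left; linear_combination h'
      · rintro (h' | h')
        · right; linear_combination h'
        · left; linear_combination h'
    have hCsub' : ∀ y ∈ W.verts, y ≠ x → ∃ i : ZMod n, f (-i) = y := by
      intro y hy hyx
      obtain ⟨i, hi⟩ := hCsub y hy hyx
      exact ⟨-i, by rw [neg_neg]; exact hi⟩
    have hfirst' : ∃ i : ZMod n, f (-i) = ((ω.getVert 1 : ↥W.verts) : V) ∧
        f (-(i+1)) = ((ω.getVert 2 : ↥W.verts) : V) := by
      refine ⟨-i1, by rw [neg_neg]; exact hi1, ?_⟩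
      have : -(-i1 + 1) = i2 := by linear_combination h
      rw [this]
      exact hi2
    obtain ⟨s, m, hm1, hmn, heq, he1, he2⟩ :=
      cyclewalk_arc (f := fun i : ZMod n => f (-i)) hn3 hinj' hadjC' hx hCsub' ω hcyc hcover
        hcomp hfirst'
    refine ⟨-s - (m:ℕ), m, hm1, hmn, ?_, ?_, ?_⟩
    · rw [heq, arc_neg]
    · have : f (-(s + (m:ℕ))) = f (-s - (m:ℕ)) := by ring_nf
      rw [← this]
      exact he2
    · have : f (-s) = f (-s - (m:ℕ) + (m:ℕ)) := by ring_nf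
      rw [← this]
      exact he1

section Helpers

lemma card_components_connected {X : Type*} {H : SimpleGraph X} (h : H.Connected) :
    Nat.card H.ConnectedComponent = 1 := by
  have hs : Subsingleton H.ConnectedComponent := by
    constructor
    intro D D'
    refine ConnectedComponent.ind₂ (fun a b => ?_) D D'
    exact ConnectedComponent.sound (h.preconnected a b)
  have hn : Nonempty H.ConnectedComponent := by
    obtain ⟨x⟩ := h.nonempty
    exact ⟨H.connectedComponentMk x⟩
  rw [Nat.card_eq_one_iff_unique]
  exact ⟨hs, hn⟩

variable {n : ℕ} [NeZero n]

lemma natinj {a b : ℕ} (ha : a < n) (hb : b < n) (h : (a : ZMod n) = (b : ZMod n)) : a = b := by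
  have := congrArg ZMod.val h
  rwa [ZMod.val_cast_of_lt ha, ZMod.val_cast_of_lt hb] at this

lemma val_succ {x : ZMod n} (h : x.val ≠ n - 1) : (x + 1).val = x.val + 1 := by
  have h1 : (1:ℕ) ≤ n := Nat.one_le_iff_ne_zero.mpr (NeZero.ne n)
  have hx : x = ((x.val : ℕ) : ZMod n) := (ZMod.natCast_rightInverse x).symm
  have hlt : x.val + 1 < n := by
    have := ZMod.val_lt x
    omega
  conv_lhs => rw [hx]
  rw [← Nat.cast_one, ← Nat.cast_add, ZMod.val_cast_of_lt hlt]

lemma val_last {x : ZMod n} (h : x.val = n - 1) : x = -1 := by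
  have h1 : (1:ℕ) ≤ n := Nat.one_le_iff_ne_zero.mpr (NeZero.ne n)
  have hx : x = ((x.val : ℕ) : ZMod n) := (ZMod.natCast_rightInverse x).symm
  rw [hx, h]
  have : ((n - 1 : ℕ) : ZMod n) = (n : ZMod n) - 1 := by
    rw [Nat.cast_sub h1, Nat.cast_one]
  rw [this, ZMod.natCast_self]
  ring

/-- position of `i` relative to base point `a0`. -/
def zpos (a0 i : ZMod n) : ℕ := (i - a0).val

lemma zpos_lt (a0 i : ZMod n) : zpos a0 i < n := ZMod.val_lt _

lemma zpos_inj {a0 i j : ZMod n} (h : zpos a0 i = zpos a0 j) : i = j := by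
  have := ZMod.val_injective n h
  have h2 := congrArg (fun z => z + a0) this
  simpa using h2

lemma g_zpos (a0 i : ZMod n) : a0 + ((zpos a0 i : ℕ) : ZMod n) = i := by
  unfold zpos
  rw [ZMod.natCast_rightInverse (i - a0)]
  ring

lemma zpos_g (a0 : ZMod n) {t : ℕ} (ht : t < n) : zpos a0 (a0 + (t : ZMod n)) = t := by
  unfold zpos
  rw [add_sub_cancel_left, ZMod.val_cast_of_lt ht]

lemma zpos_succ {a0 i : ZMod n} (h : i ≠ a0 - 1) : zpos a0 (i + 1) = zpos a0 i + 1 := by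
  unfold zpos
  have h2 : i + 1 - a0 = (i - a0) + 1 := by ring
  rw [h2]
  apply val_succ
  intro hcon
  apply h
  have := val_last hcon
  have h3 := congrArg (fun z => z + a0) this
  rw [sub_add_cancel] at h3
  rw [h3]
  ring

lemma zpos_run {a0 s : ZMod n} {L : ℕ} (h : ∀ j : ℕ, j < L → s + (j : ZMod n) ≠ a0 - 1) :
    ∀ j : ℕ, j ≤ L → zpos a0 (s + (j : ZMod n)) = zpos a0 s + j := by
  intro j
  induction j with
  | zero => intro _; simp
  | succ jj ih =>
    intro hle
    have ihv := ih (by omega)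
    have hcast : s + ((jj + 1 : ℕ) : ZMod n) = (s + (jj : ZMod n)) + 1 := by push_cast; ring
    rw [hcast, zpos_succ (h jj (by omega)), ihv]
    omega

end Helpers

section Core

variable {V : Type} {G : SimpleGraph V}

lemma subgraph_reach {W : G.Subgraph} (g : ℕ → V) (t1 : ℕ)
    (hmem : g t1 ∈ W.verts) :
    ∀ t2 : ℕ, t1 ≤ t2 → (∀ t, t1 ≤ t → t < t2 → W.Adj (g t) (g (t+1))) →
      ∀ (hm : g t2 ∈ W.verts), W.coe.Reachable ⟨g t1, hmem⟩ ⟨g t2, hm⟩ := by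
  intro t2
  induction t2 with
  | zero =>
    intro h0 _ hm
    have : t1 = 0 := by omega
    subst this
    exact Reachable.refl _
  | succ tt ih =>
    intro hle hadj hm
    rcases Nat.lt_or_ge t1 (tt+1) with hlt | hge
    · have hWadj : W.Adj (g tt) (g (tt+1)) := hadj tt (by omega) (by omega)
      have hmem' : g tt ∈ W.verts := hWadj.fst_mem
      have hr := ih (by omega) (fun t h1 h2 => hadj t h1 (by omega)) hmem'
      exact hr.trans (Subgraph.Adj.coe hWadj).reachable
    · have : t1 = tt + 1 := by omega
      subst this
      exact Reachable.refl _

lemma arc_endpoints {n : ℕ} (hn3 : 3 ≤ n) {f : ZMod n → V} (hinj : Function.Injective f)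
    (hadjD : ∀ i : ZMod n, G.Adj (f i) (f (i+1)))
    {s s' : ZMod n} {m m' : ℕ} (hm : 1 ≤ m) (hmn : m ≤ n - 1) (hm' : 1 ≤ m') (hmn' : m' ≤ n - 1)
    (he : Arc G n f s m = Arc G n f s' m') : s = s' ∧ m = m' := by
  haveI : NeZero n := ⟨by omega⟩
  have hE : ∀ i : ZMod n,
      ((∃ j : ℕ, j < m ∧ i = s + j) ↔ (∃ j : ℕ, j < m' ∧ i = s' + j)) := by
    intro i
    constructor
    · rintro ⟨j, hj, rfl⟩
      have hadj : (Arc G n f s m).Adj (f (s + (j:ZMod n))) (f (s + ((j+1:ℕ):ZMod n))) := by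
        refine ⟨⟨j, hj, Or.inl ⟨rfl, rfl⟩⟩, ?_⟩
        have hcast : s + ((j+1 : ℕ) : ZMod n) = s + (j : ZMod n) + 1 := by push_cast; ring
        rw [hcast]
        exact hadjD _
      rw [he] at hadj
      obtain ⟨⟨j', hj', hor⟩, -⟩ := hadj
      rcases hor with ⟨h1, -⟩ | ⟨h1, h2⟩
      · exact ⟨j', hj', hinj h1⟩
      · exfalso
        have e1 : s + (j : ZMod n) = s' + ((j'+1 : ℕ) : ZMod n) := hinj h2
        have e2 : s + ((j+1:ℕ) : ZMod n) = s' + (j' : ZMod n) := hinj h1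
        have h20 : (2 : ZMod n) = 0 := by
          push_cast at e1 e2
          linear_combination e2 - e1
        have hval := congrArg ZMod.val h20
        rw [show ((2 : ZMod n)) = ((2 : ℕ) : ZMod n) by push_cast; ring] at hval
        rw [ZMod.val_cast_of_lt (by omega), ZMod.val_zero] at hval
        omega
    · rintro ⟨j, hj, rfl⟩
      have hadj : (Arc G n f s' m').Adj (f (s' + (j:ZMod n))) (f (s' + ((j+1:ℕ):ZMod n))) := by
        refine ⟨⟨j, hj, Or.inl ⟨rfl, rfl⟩⟩, ?_⟩
        have hcast : s' + ((j+1 : ℕ) : ZMod n) = s' + (j : ZMod n) + 1 := by push_cast; ring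
        rw [hcast]
        exact hadjD _
      rw [← he] at hadj
      obtain ⟨⟨j', hj', hor⟩, -⟩ := hadj
      rcases hor with ⟨h1, -⟩ | ⟨h1, h2⟩
      · exact ⟨j', hj', hinj h1⟩
      · exfalso
        have e1 : s' + (j : ZMod n) = s + ((j'+1 : ℕ) : ZMod n) := hinj h2
        have e2 : s' + ((j+1:ℕ) : ZMod n) = s + (j' : ZMod n) := hinj h1
        have h20 : (2 : ZMod n) = 0 := by
          push_cast at e1 e2
          linear_combination e2 - e1
        have hval := congrArg ZMod.val h20
        rw [show ((2 : ZMod n)) = ((2 : ℕ) : ZMod n) by push_cast; ring] at hval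
        rw [ZMod.val_cast_of_lt (by omega), ZMod.val_zero] at hval
        omega
  have hneg1 : ((n - 1 : ℕ) : ZMod n) = -1 := by
    rw [Nat.cast_sub (by omega : 1 ≤ n), Nat.cast_one, ZMod.natCast_self]
    ring
  have hss : s = s' := by
    obtain ⟨j1, hj1, hs⟩ := (hE s).mp ⟨0, by omega, by simp⟩
    rcases Nat.eq_zero_or_pos j1 with rfl | hj1pos
    · simpa using hs
    · exfalso
      have hstep : s - 1 = s' + ((j1 - 1 : ℕ) : ZMod n) := by
        rw [hs]
        have hc : ((j1 : ℕ) : ZMod n) = ((j1 - 1 : ℕ) : ZMod n) + 1 := by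
          have h1 : (j1 - 1) + 1 = j1 := by omega
          rw [← h1]
          push_cast
          ring
        rw [hc]
        ring
      have hsm : s - 1 ∈ {i : ZMod n | ∃ j : ℕ, j < m ∧ i = s + j} := by
        apply (hE (s - 1)).mpr
        exact ⟨j1 - 1, by omega, hstep⟩
      obtain ⟨j, hjm, hj⟩ := hsm
      have : ((j : ℕ) : ZMod n) = ((n - 1 : ℕ) : ZMod n) := by
        rw [hneg1]
        linear_combination -hj
      have := natinj (by omega) (by omega) this
      omega
  subst hss
  have hmm : m = m' := by
    rcases Nat.lt_trichotomy m m' with h | h | h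
    · exfalso
      obtain ⟨j, hjm, hj⟩ := (hE (s + (m : ZMod n))).mpr ⟨m, h, rfl⟩
      have : ((m : ℕ) : ZMod n) = ((j : ℕ) : ZMod n) := by linear_combination hj
      have := natinj (by omega) (by omega) this
      omega
    · exact h
    · exfalso
      obtain ⟨j, hjm, hj⟩ := (hE (s + (m' : ZMod n))).mp ⟨m', h, rfl⟩
      have : ((m' : ℕ) : ZMod n) = ((j : ℕ) : ZMod n) := by linear_combination hj
      have := natinj (by omega) (by omega) this
      omega
  exact ⟨rfl, hmm⟩


lemma core {n : ℕ} (hn3 : 3 ≤ n) {f : ZMod n → V} (hinj : Function.Injective f)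
    (hadjC : ∀ i j : ZMod n, G.Adj (f i) (f j) ↔ j = i + 1 ∨ i = j + 1)
    {p q r : ZMod n} {k l m : ℕ}
    (hk1 : 1 ≤ k) (hkn : k ≤ n - 1) (hl1 : 1 ≤ l) (hln : l ≤ n - 1)
    (hm1 : 1 ≤ m) (hmn : m ≤ n - 1)
    (hcomp2 : Nat.card ((Arc G n f p k ⊓ Arc G n f q l).coe.ConnectedComponent) = 2)
    {w : V}
    (hNsub : ∀ y, G.Adj w y → y ∈ (Arc G n f p k ⊓ Arc G n f q l).verts)
    (hnb : ∀ D : (Arc G n f p k ⊓ Arc G n f q l).coe.ConnectedComponent,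
      ∃ d ∈ Subtype.val '' D.supp, G.Adj w d)
    (hNw2 : ∀ y, G.Adj w y → y ∈ (Arc G n f r m).verts → y = f r ∨ y = f (r + (m:ℕ)))
    (hb1 : G.Adj w (f r)) (hb2 : G.Adj w (f (r + (m:ℕ)))) :
    Arc G n f r m ≤ Arc G n f p k ∨ Arc G n f r m ≤ Arc G n f q l := by
  haveI : NeZero n := ⟨by omega⟩
  have hadjD : ∀ i : ZMod n, G.Adj (f i) (f (i+1)) := fun i => (hadjC i (i+1)).mpr (Or.inl rfl)
  -- existence of an edge of P not in Q
  have hα : ∃ jα : ℕ, jα < k ∧ ∀ jj : ℕ, jj < l → p + (jα : ZMod n) ≠ q + (jj : ZMod n) := by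
    by_contra hcon
    push_neg at hcon
    have hle : Arc G n f p k ≤ Arc G n f q l := arc_le hk1 (fun j hj => hcon j hj)
    have heq : Arc G n f p k ⊓ Arc G n f q l = Arc G n f p k := inf_eq_left.mpr hle
    rw [heq, card_components_connected (arc_connected hadjD)] at hcomp2
    omega
  obtain ⟨j0, hj0k, hαQ⟩ := hα
  set α : ZMod n := p + (j0 : ZMod n) with hαdef
  set a0 : ZMod n := α + 1 with ha0
  have ha0α : a0 - 1 = α := by rw [ha0]; ring
  have hidx_eq : ∀ (i : ZMod n) (t : ℕ), zpos a0 i = t → i = a0 + (t : ZMod n) := by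
    intro i t hpi
    rw [← hpi]
    exact (g_zpos a0 i).symm
  have hq_run : ∀ j : ℕ, j ≤ l → zpos a0 (q + (j : ZMod n)) = zpos a0 q + j := by
    apply zpos_run
    intro j hj hcon
    rw [ha0α] at hcon
    exact hαQ j hj hcon.symm
  have hql : zpos a0 q + l ≤ n - 1 := by
    have := zpos_lt a0 (q + (l : ZMod n))
    rw [hq_run l le_rfl] at this
    omega
  have hp_run1 : ∀ j : ℕ, j ≤ j0 → zpos a0 (p + (j:ZMod n)) = zpos a0 p + j := by
    apply zpos_run
    intro j hj hcon
    rw [ha0α, hαdef] at hcon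
    have hjj : (j : ZMod n) = (j0 : ZMod n) := by linear_combination hcon
    have := natinj (by omega) (by omega) hjj
    omega
  have hπα : zpos a0 α = n - 1 := by
    have hsub : α - a0 = -1 := by rw [ha0]; ring
    unfold zpos
    rw [hsub]
    have hne : ((n - 1 : ℕ) : ZMod n) = -1 := by
      rw [Nat.cast_sub (by omega : 1 ≤ n), Nat.cast_one, ZMod.natCast_self]
      ring
    rw [← hne, ZMod.val_cast_of_lt (by omega)]
  have hpn : zpos a0 p + j0 = n - 1 := by
    rw [← hp_run1 j0 le_rfl, ← hαdef]
    exact hπα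
  have hp_run2 : ∀ j : ℕ, j0 < j → j ≤ k → zpos a0 (p + (j : ZMod n)) = j - j0 - 1 := by
    intro j hjl hjk
    have hidx : p + (j : ZMod n) = a0 + ((j - j0 - 1 : ℕ) : ZMod n) := by
      rw [ha0, hαdef]
      have h1 : j0 + 1 + (j - j0 - 1) = j := by omega
      have hcast : ((j : ℕ) : ZMod n) = ((j0 : ℕ) : ZMod n) + 1 + ((j - j0 - 1 : ℕ) : ZMod n) := by
        calc ((j:ℕ) : ZMod n) = ((j0 + 1 + (j - j0 - 1) : ℕ) : ZMod n) := by rw [h1]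
        _ = _ := by push_cast; ring
      rw [hcast]; ring
    rw [hidx, zpos_g a0 (by omega)]
  set pp := zpos a0 p with hppdef
  set qq := zpos a0 q with hqqdef
  set P1 : ℕ → Prop := fun t => pp ≤ t ∧ qq ≤ t ∧ t ≤ qq + l with hP1def
  set P2 : ℕ → Prop := fun t => qq ≤ t ∧ t + n ≤ pp + k ∧ t ≤ qq + l with hP2def
  have hdisj : ∀ t, P1 t → P2 t → False := by
    intro t h1 h2
    rw [hP1def] at h1
    rw [hP2def] at h2
    omega
  have hppn : pp + j0 = n - 1 := hpn
  -- vertex membership gives positions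
  have hmemV : ∀ y, y ∈ (Arc G n f p k ⊓ Arc G n f q l).verts →
      ∃ t : ℕ, (P1 t ∨ P2 t) ∧ y = f (a0 + (t : ZMod n)) := by
    intro y hy
    rw [Subgraph.verts_inf] at hy
    obtain ⟨⟨jp, hjple, hyp⟩, ⟨jq, hjqle, hyq⟩⟩ := hy
    have hidx : p + (jp : ZMod n) = q + (jq : ZMod n) := by
      apply hinj
      rw [← hyp, ← hyq]
    have hyq' : y = f (a0 + ((qq + jq : ℕ) : ZMod n)) := by
      rw [hyq]
      congr 1
      apply hidx_eq
      rw [hq_run jq hjqle]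
    rcases le_or_gt jp j0 with hcase | hcase
    · refine ⟨qq + jq, Or.inl ?_, hyq'⟩
      have heqpos : pp + jp = qq + jq := by
        have h1 := hp_run1 jp hcase
        have h2 := hq_run jq hjqle
        rw [hidx] at h1
        rw [h1] at h2
        omega
      rw [hP1def]
      refine ⟨by omega, by omega, by omega⟩
    · refine ⟨qq + jq, Or.inr ?_, hyq'⟩
      have heqpos : jp - j0 - 1 = qq + jq := by
        have h1 := hp_run2 jp hcase hjple
        have h2 := hq_run jq hjqle
        rw [hidx] at h1
        rw [h1] at h2
        omega
      rw [hP2def]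
      refine ⟨by omega, by omega, by omega⟩
  -- positions give vertex membership
  have hmemP : ∀ t : ℕ, P1 t ∨ P2 t → f (a0 + (t:ZMod n)) ∈ (Arc G n f p k).verts := by
    intro t hor
    rcases hor with h1 | h2
    · rw [hP1def] at h1
      refine ⟨t - pp, by omega, ?_⟩
      congr 1
      symm
      apply hidx_eq
      rw [hp_run1 (t - pp) (by omega)]
      omega
    · rw [hP2def] at h2
      refine ⟨t + j0 + 1, by omega, ?_⟩
      congr 1
      symm
      apply hidx_eq
      rw [hp_run2 (t + j0 + 1) (by omega) (by omega)]
      omega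
  have hmemQ : ∀ t : ℕ, P1 t ∨ P2 t → f (a0 + (t:ZMod n)) ∈ (Arc G n f q l).verts := by
    intro t hor
    have h1 : qq ≤ t ∧ t ≤ qq + l := by
      rcases hor with h | h
      · rw [hP1def] at h; omega
      · rw [hP2def] at h; omega
    refine ⟨t - qq, by omega, ?_⟩
    congr 1
    symm
    apply hidx_eq
    rw [hq_run (t - qq) (by omega)]
    omega
  have hmemPQ : ∀ t : ℕ, P1 t ∨ P2 t →
      f (a0 + (t:ZMod n)) ∈ (Arc G n f p k ⊓ Arc G n f q l).verts := by
    intro t hor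
    rw [Subgraph.verts_inf]
    exact ⟨hmemP t hor, hmemQ t hor⟩
  -- edge structure of the intersection
  have h20 : ∀ (x y : ZMod n), x = y + 1 → x + 1 = y → False := by
    intro x y h1 h2
    have : (2 : ZMod n) = 0 := by linear_combination h2 - h1
    have hval := congrArg ZMod.val this
    rw [show ((2 : ZMod n)) = ((2 : ℕ) : ZMod n) by push_cast; ring] at hval
    rw [ZMod.val_cast_of_lt (by omega), ZMod.val_zero] at hval
    omega
  have hedge : ∀ a b, (Arc G n f p k ⊓ Arc G n f q l).Adj a b →
      ∃ t : ℕ, ((P1 t ∧ P1 (t+1)) ∨ (P2 t ∧ P2 (t+1))) ∧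
      ((a = f (a0 + (t : ZMod n)) ∧ b = f (a0 + ((t+1:ℕ) : ZMod n))) ∨
       (b = f (a0 + (t:ZMod n)) ∧ a = f (a0 + ((t+1:ℕ):ZMod n)))) := by
    intro a b hab
    rw [Subgraph.inf_adj] at hab
    obtain ⟨⟨⟨jp, hjp, horp⟩, -⟩, ⟨⟨jq, hjq, horq⟩, -⟩⟩ := hab
    -- alignment of the p-edge and q-edge
    have halign : q + (jq : ZMod n) = p + (jp : ZMod n) ∧
        q + ((jq+1:ℕ) : ZMod n) = p + ((jp+1:ℕ) : ZMod n) := by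
      rcases horq with ⟨haq, hbq⟩ | ⟨hbq, haq⟩ <;>
        rcases horp with ⟨hap, hbp⟩ | ⟨hbp, hap⟩
      · exact ⟨hinj (haq.symm.trans hap), hinj (hbq.symm.trans hbp)⟩
      · exfalso
        have e1 : q + (jq : ZMod n) = p + ((jp+1:ℕ) : ZMod n) := hinj (haq.symm.trans hap)
        have e2 : q + ((jq+1:ℕ) : ZMod n) = p + (jp : ZMod n) := hinj (hbq.symm.trans hbp)
        refine h20 (q + (jq:ZMod n)) (p + (jp:ZMod n)) (by push_cast at e1 ⊢; linear_combination e1) ?_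
        push_cast at e2 ⊢
        linear_combination e2
      · exfalso
        have e1 : q + ((jq+1:ℕ) : ZMod n) = p + (jp : ZMod n) := hinj (haq.symm.trans hap)
        have e2 : q + (jq : ZMod n) = p + ((jp+1:ℕ) : ZMod n) := hinj (hbq.symm.trans hbp)
        refine h20 (q + (jq:ZMod n)) (p + (jp:ZMod n)) (by push_cast at e2 ⊢; linear_combination e2) ?_
        push_cast at e1 ⊢
        linear_combination e1
      · exact ⟨hinj (hbq.symm.trans hbp), hinj (haq.symm.trans hap)⟩
    obtain ⟨hal1, hal2⟩ := halign
    have hpos1 : zpos a0 (q + (jq : ZMod n)) = qq + jq := hq_run jq (by omega)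
    have hpos2 : zpos a0 (q + ((jq+1:ℕ) : ZMod n)) = qq + jq + 1 := by
      rw [hq_run (jq+1) (by omega)]
      omega
    have hparts : (P1 (qq + jq) ∧ P1 (qq + jq + 1)) ∨ (P2 (qq + jq) ∧ P2 (qq + jq + 1)) := by
      rcases le_or_gt jp j0 with hcase | hcase
      · rcases Nat.lt_or_ge jp j0 with hcase' | hcase'
        · -- jp < j0 : P1 pair
          left
          have e1 : pp + jp = qq + jq := by
            have := hp_run1 jp (by omega)
            rw [hal1] at hpos1
            omega
          have e2 : pp + jp + 1 = qq + jq + 1 := by omega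
          constructor
          · rw [hP1def]; refine ⟨by omega, by omega, ?_⟩
            have := zpos_lt a0 (q + ((jq+1:ℕ) : ZMod n))
            omega
          · rw [hP1def]; refine ⟨by omega, by omega, by omega⟩
        · -- jp = j0 : impossible
          exfalso
          have hjpj0 : jp = j0 := by omega
          subst hjpj0
          have := hp_run2 (jp+1) (by omega) (by omega)
          rw [hal2] at hpos2
          rw [this] at hpos2
          have hq1 : qq + jq + 1 ≥ 1 := by omega
          omega
      · -- jp > j0 : P2 pair
        right
        have e1 : jp - j0 - 1 = qq + jq := by
          have := hp_run2 jp hcase (by omega)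
          rw [hal1] at hpos1
          omega
        have e2 : jp - j0 = qq + jq + 1 := by omega
        constructor
        · rw [hP2def]; refine ⟨by omega, by omega, by omega⟩
        · rw [hP2def]; refine ⟨by omega, by omega, by omega⟩
    refine ⟨qq + jq, hparts, ?_⟩
    have hia : q + (jq : ZMod n) = a0 + ((qq + jq : ℕ) : ZMod n) := hidx_eq _ _ hpos1
    have hib : q + ((jq+1:ℕ) : ZMod n) = a0 + ((qq + jq + 1 : ℕ) : ZMod n) := hidx_eq _ _ hpos2
    rcases horq with ⟨haq, hbq⟩ | ⟨hbq, haq⟩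
    · left
      exact ⟨by rw [haq, hia], by rw [hbq, hib]⟩
    · right
      exact ⟨by rw [hbq, hia], by rw [haq, hib]⟩
  -- adjacency constructors inside the intersection
  have hcast1 : ∀ t : ℕ, a0 + ((t+1:ℕ) : ZMod n) = (a0 + (t : ZMod n)) + 1 := by
    intro t; push_cast; ring
  have hP1adj : ∀ t, P1 t → P1 (t+1) →
      (Arc G n f p k ⊓ Arc G n f q l).Adj (f (a0 + (t:ZMod n))) (f (a0 + ((t+1:ℕ):ZMod n))) := by
    intro t h1 h2
    rw [hP1def] at h1 h2
    rw [Subgraph.inf_adj]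
    have hGadj : G.Adj (f (a0 + (t:ZMod n))) (f (a0 + ((t+1:ℕ):ZMod n))) := by
      rw [hcast1 t]
      exact hadjD _
    constructor
    · refine ⟨⟨t - pp, by omega, Or.inl ⟨?_, ?_⟩⟩, hGadj⟩
      · congr 1
        symm
        apply hidx_eq
        rw [hp_run1 (t - pp) (by omega)]
        omega
      · congr 1
        symm
        apply hidx_eq
        rw [hp_run1 (t - pp + 1) (by omega)]
        omega
    · refine ⟨⟨t - qq, by omega, Or.inl ⟨?_, ?_⟩⟩, hGadj⟩
      · congr 1
        symm
        apply hidx_eq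
        rw [hq_run (t - qq) (by omega)]
        omega
      · congr 1
        symm
        apply hidx_eq
        rw [hq_run (t - qq + 1) (by omega)]
        omega
  have hP2adj : ∀ t, P2 t → P2 (t+1) →
      (Arc G n f p k ⊓ Arc G n f q l).Adj (f (a0 + (t:ZMod n))) (f (a0 + ((t+1:ℕ):ZMod n))) := by
    intro t h1 h2
    rw [hP2def] at h1 h2
    rw [Subgraph.inf_adj]
    have hGadj : G.Adj (f (a0 + (t:ZMod n))) (f (a0 + ((t+1:ℕ):ZMod n))) := by
      rw [hcast1 t]
      exact hadjD _
    constructor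
    · refine ⟨⟨t + j0 + 1, by omega, Or.inl ⟨?_, ?_⟩⟩, hGadj⟩
      · congr 1
        symm
        apply hidx_eq
        rw [hp_run2 (t + j0 + 1) (by omega) (by omega)]
        omega
      · congr 1
        symm
        apply hidx_eq
        rw [hp_run2 (t + j0 + 1 + 1) (by omega) (by omega)]
        omega
    · refine ⟨⟨t - qq, by omega, Or.inl ⟨?_, ?_⟩⟩, hGadj⟩
      · congr 1
        symm
        apply hidx_eq
        rw [hq_run (t - qq) (by omega)]
        omega
      · congr 1
        symm
        apply hidx_eq
        rw [hq_run (t - qq + 1) (by omega)]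
        omega
  have hposdet : ∀ (t t' : ℕ), t ≤ n - 1 → t' ≤ n - 1 →
      f (a0 + (t:ZMod n)) = f (a0 + (t':ZMod n)) → t = t' := by
    intro t t' ht ht' he
    have h1 := hinj he
    have h2 : (t : ZMod n) = (t' : ZMod n) := by linear_combination h1
    exact natinj (by omega) (by omega) h2
  have hP1bound : ∀ t, P1 t → t ≤ n - 1 := by
    intro t h; rw [hP1def] at h; omega
  have hP2bound : ∀ t, P2 t → t ≤ n - 1 := by
    intro t h; rw [hP2def] at h; omega
  have hclose2 : ∀ (aa bb : ↥(Arc G n f p k ⊓ Arc G n f q l).verts),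
      (Arc G n f p k ⊓ Arc G n f q l).coe.Adj aa bb →
      (∃ t, P2 t ∧ (aa : V) = f (a0 + (t:ZMod n))) →
      (∃ t', P2 t' ∧ (bb : V) = f (a0 + (t':ZMod n))) := by
    rintro aa bb hadj ⟨ta, hta, haa⟩
    obtain ⟨t, hparts, hor⟩ := hedge aa.val bb.val hadj
    rcases hparts with ⟨h1, h2⟩ | ⟨h1, h2⟩
    · exfalso
      rcases hor with ⟨ha, hb⟩ | ⟨hb, ha⟩
      · have heq : ta = t := hposdet ta t (hP2bound ta hta) (hP1bound t h1) (haa.symm.trans ha)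
        rw [heq] at hta
        exact hdisj t h1 hta
      · have heq : ta = t + 1 :=
          hposdet ta (t+1) (hP2bound ta hta) (hP1bound (t+1) h2) (haa.symm.trans ha)
        rw [heq] at hta
        exact hdisj (t+1) h2 hta
    · rcases hor with ⟨ha, hb⟩ | ⟨hb, ha⟩
      · exact ⟨t+1, h2, hb⟩
      · exact ⟨t, h1, hb⟩
  have hclose1 : ∀ (aa bb : ↥(Arc G n f p k ⊓ Arc G n f q l).verts),
      (Arc G n f p k ⊓ Arc G n f q l).coe.Adj aa bb →
      (∃ t, P1 t ∧ (aa : V) = f (a0 + (t:ZMod n))) →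
      (∃ t', P1 t' ∧ (bb : V) = f (a0 + (t':ZMod n))) := by
    rintro aa bb hadj ⟨ta, hta, haa⟩
    obtain ⟨t, hparts, hor⟩ := hedge aa.val bb.val hadj
    rcases hparts with ⟨h1, h2⟩ | ⟨h1, h2⟩
    · rcases hor with ⟨ha, hb⟩ | ⟨hb, ha⟩
      · exact ⟨t+1, h2, hb⟩
      · exact ⟨t, h1, hb⟩
    · exfalso
      rcases hor with ⟨ha, hb⟩ | ⟨hb, ha⟩
      · have heq : ta = t := hposdet ta t (hP1bound ta hta) (hP2bound t h1) (haa.symm.trans ha)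
        rw [heq] at hta
        exact hdisj t hta h1
      · have heq : ta = t + 1 :=
          hposdet ta (t+1) (hP1bound ta hta) (hP2bound (t+1) h2) (haa.symm.trans ha)
        rw [heq] at hta
        exact hdisj (t+1) hta h2
  have hreach1 : ∀ t t', P1 t → P1 t' → ∀ (h1 : _) (h2 : _),
      (Arc G n f p k ⊓ Arc G n f q l).coe.Reachable
        ⟨f (a0 + (t:ZMod n)), h1⟩ ⟨f (a0 + (t':ZMod n)), h2⟩ := by
    have haux : ∀ t t', P1 t → P1 t' → t ≤ t' → ∀ (h1 : _) (h2 : _),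
        (Arc G n f p k ⊓ Arc G n f q l).coe.Reachable
          ⟨f (a0 + (t:ZMod n)), h1⟩ ⟨f (a0 + (t':ZMod n)), h2⟩ := by
      intro t t' ht ht' hle h1 h2
      apply subgraph_reach (fun tt => f (a0 + (tt:ZMod n))) t h1 t' hle
      intro s hs1 hs2
      have hs : P1 s := by
        rw [hP1def] at ht ht' ⊢
        omega
      have hs' : P1 (s+1) := by
        rw [hP1def] at ht ht' ⊢
        omega
      exact hP1adj s hs hs'
    intro t t' ht ht' h1 h2
    rcases le_total t t' with hle | hle
    · exact haux t t' ht ht' hle h1 h2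
    · exact (haux t' t ht' ht hle h2 h1).symm
  have hreach2 : ∀ t t', P2 t → P2 t' → ∀ (h1 : _) (h2 : _),
      (Arc G n f p k ⊓ Arc G n f q l).coe.Reachable
        ⟨f (a0 + (t:ZMod n)), h1⟩ ⟨f (a0 + (t':ZMod n)), h2⟩ := by
    have haux : ∀ t t', P2 t → P2 t' → t ≤ t' → ∀ (h1 : _) (h2 : _),
        (Arc G n f p k ⊓ Arc G n f q l).coe.Reachable
          ⟨f (a0 + (t:ZMod n)), h1⟩ ⟨f (a0 + (t':ZMod n)), h2⟩ := by
      intro t t' ht ht' hle h1 h2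
      apply subgraph_reach (fun tt => f (a0 + (tt:ZMod n))) t h1 t' hle
      intro s hs1 hs2
      have hs : P2 s := by
        rw [hP2def] at ht ht' ⊢
        omega
      have hs' : P2 (s+1) := by
        rw [hP2def] at ht ht' ⊢
        omega
      exact hP2adj s hs hs'
    intro t t' ht ht' h1 h2
    rcases le_total t t' with hle | hle
    · exact haux t t' ht ht' hle h1 h2
    · exact (haux t' t ht' ht hle h2 h1).symm
  obtain ⟨D1, D2, hD12, hDuniv⟩ := Nat.card_eq_two_iff.mp hcomp2
  have hP1ne : ∃ t, P1 t := by
    by_contra hcon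
    push_neg at hcon
    apply hD12
    obtain ⟨aa, haa⟩ := D1.exists_rep
    obtain ⟨bb, hbb⟩ := D2.exists_rep
    obtain ⟨ta, hora, hfa⟩ := hmemV aa.val aa.2
    obtain ⟨tb, horb, hfb⟩ := hmemV bb.val bb.2
    rcases hora with h | hpa
    · exact absurd h (hcon ta)
    rcases horb with h | hpb
    · exact absurd h (hcon tb)
    rw [← haa, ← hbb]
    apply ConnectedComponent.sound
    have haa' : aa = ⟨f (a0 + (ta:ZMod n)), hmemPQ ta (Or.inr hpa)⟩ := Subtype.ext hfa
    have hbb' : bb = ⟨f (a0 + (tb:ZMod n)), hmemPQ tb (Or.inr hpb)⟩ := Subtype.ext hfb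
    rw [haa', hbb']
    exact hreach2 ta tb hpa hpb _ _
  have hP2ne : ∃ t, P2 t := by
    by_contra hcon
    push_neg at hcon
    apply hD12
    obtain ⟨aa, haa⟩ := D1.exists_rep
    obtain ⟨bb, hbb⟩ := D2.exists_rep
    obtain ⟨ta, hora, hfa⟩ := hmemV aa.val aa.2
    obtain ⟨tb, horb, hfb⟩ := hmemV bb.val bb.2
    rcases hora with hpa | h
    swap
    · exact absurd h (hcon ta)
    rcases horb with hpb | h
    swap
    · exact absurd h (hcon tb)
    rw [← haa, ← hbb]
    apply ConnectedComponent.sound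
    have haa' : aa = ⟨f (a0 + (ta:ZMod n)), hmemPQ ta (Or.inl hpa)⟩ := Subtype.ext hfa
    have hbb' : bb = ⟨f (a0 + (tb:ZMod n)), hmemPQ tb (Or.inl hpb)⟩ := Subtype.ext hfb
    rw [haa', hbb']
    exact hreach1 ta tb hpa hpb _ _
  have hd1 : ∃ td, P1 td ∧ G.Adj w (f (a0 + (td:ZMod n))) := by
    obtain ⟨t1, ht1⟩ := hP1ne
    obtain ⟨d, hdmem, hdadj⟩ :=
      hnb ((Arc G n f p k ⊓ Arc G n f q l).coe.connectedComponentMk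
        ⟨f (a0 + (t1:ZMod n)), hmemPQ t1 (Or.inl ht1)⟩)
    obtain ⟨dd, hddsupp, hdval⟩ := hdmem
    have hdd2 : d ∈ (Arc G n f p k ⊓ Arc G n f q l).verts := by
      rw [← hdval]; exact dd.2
    obtain ⟨td, hor, hdf⟩ := hmemV d hdd2
    rcases hor with h | h
    · exact ⟨td, h, by rw [← hdf]; exact hdadj⟩
    · exfalso
      have hmk := (ConnectedComponent.mem_supp_iff _ _).mp hddsupp
      obtain ⟨wk⟩ := (ConnectedComponent.eq).mp hmk
      have hend := mem_of_walk_closed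
        (S := {z : ↥(Arc G n f p k ⊓ Arc G n f q l).verts |
          ∃ t', P2 t' ∧ (z:V) = f (a0 + (t':ZMod n))})
        (fun y hy z hz => hclose2 y z hz hy) wk
        ⟨td, h, by rw [hdval]; exact hdf⟩
      obtain ⟨t', ht', hanch⟩ := hend
      have : t1 = t' := hposdet t1 t' (hP1bound t1 ht1) (hP2bound t' ht') hanch
      subst this
      exact hdisj t1 ht1 ht'
  have hd2 : ∃ td, P2 td ∧ G.Adj w (f (a0 + (td:ZMod n))) := by
    obtain ⟨t2, ht2⟩ := hP2ne
    obtain ⟨d, hdmem, hdadj⟩ :=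
      hnb ((Arc G n f p k ⊓ Arc G n f q l).coe.connectedComponentMk
        ⟨f (a0 + (t2:ZMod n)), hmemPQ t2 (Or.inr ht2)⟩)
    obtain ⟨dd, hddsupp, hdval⟩ := hdmem
    have hdd2 : d ∈ (Arc G n f p k ⊓ Arc G n f q l).verts := by
      rw [← hdval]; exact dd.2
    obtain ⟨td, hor, hdf⟩ := hmemV d hdd2
    rcases hor with h | h
    swap
    · exact ⟨td, h, by rw [← hdf]; exact hdadj⟩
    · exfalso
      have hmk := (ConnectedComponent.mem_supp_iff _ _).mp hddsupp
      obtain ⟨wk⟩ := (ConnectedComponent.eq).mp hmk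
      have hend := mem_of_walk_closed
        (S := {z : ↥(Arc G n f p k ⊓ Arc G n f q l).verts |
          ∃ t', P1 t' ∧ (z:V) = f (a0 + (t':ZMod n))})
        (fun y hy z hz => hclose1 y z hz hy) wk
        ⟨td, h, by rw [hdval]; exact hdf⟩
      obtain ⟨t', ht', hanch⟩ := hend
      have : t2 = t' := hposdet t2 t' (hP2bound t2 ht2) (hP1bound t' ht') hanch
      subst this
      exact hdisj t2 ht' ht2
  -- positions of the endpoints of R
  obtain ⟨tb1, hb1or, hb1f⟩ := hmemV (f r) (hNsub _ hb1)
  have hrIdx : r = a0 + (tb1 : ZMod n) := hinj hb1f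
  obtain ⟨tb2, hb2or, hb2f⟩ := hmemV (f (r + (m:ℕ))) (hNsub _ hb2)
  have hr2Idx : r + ((m:ℕ) : ZMod n) = a0 + (tb2 : ZMod n) := hinj hb2f
  have htb1n : tb1 ≤ n - 1 := by
    rcases hb1or with h | h
    · exact hP1bound _ h
    · exact hP2bound _ h
  have htb2n : tb2 ≤ n - 1 := by
    rcases hb2or with h | h
    · exact hP1bound _ h
    · exact hP2bound _ h
  have hπr : zpos a0 r = tb1 := by
    rw [hrIdx]; exact zpos_g a0 (by omega)
  have hπr2 : zpos a0 (r + ((m:ℕ) : ZMod n)) = tb2 := by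
    rw [hr2Idx]; exact zpos_g a0 (by omega)
  by_cases hcross : ∃ j1 : ℕ, j1 < m ∧ r + (j1 : ZMod n) = α
  · -- R crosses the cut
    obtain ⟨j1, hj1m, hj1α⟩ := hcross
    have hr_run1 : ∀ j : ℕ, j ≤ j1 → zpos a0 (r + (j:ZMod n)) = tb1 + j := by
      have hz := zpos_run (a0 := a0) (s := r) (L := j1) (by
        intro j hj hcon
        rw [ha0α, ← hj1α] at hcon
        have hjj : (j : ZMod n) = (j1 : ZMod n) := by linear_combination hcon
        have := natinj (by omega) (by omega) hjj
        omega)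
      intro j hj
      rw [hz j hj, hπr]
    have htb1j1 : tb1 + j1 = n - 1 := by
      have h1 := hr_run1 j1 le_rfl
      rw [hj1α, hπα] at h1
      omega
    have hr_run2 : ∀ j : ℕ, j1 < j → j ≤ m → zpos a0 (r + (j:ZMod n)) = j - j1 - 1 := by
      intro j hjl hjk
      have hidx2 : r + (j : ZMod n) = a0 + ((j - j1 - 1 : ℕ) : ZMod n) := by
        rw [ha0, ← hj1α]
        have h1 : j1 + 1 + (j - j1 - 1) = j := by omega
        have hcast : ((j : ℕ) : ZMod n) =
            ((j1 : ℕ) : ZMod n) + 1 + ((j - j1 - 1 : ℕ) : ZMod n) := by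
          calc ((j:ℕ) : ZMod n) = ((j1 + 1 + (j - j1 - 1) : ℕ) : ZMod n) := by rw [h1]
          _ = _ := by push_cast; ring
        rw [hcast]; ring
      rw [hidx2, zpos_g a0 (by omega)]
    have htb2' : tb2 + j1 + 1 = m := by
      have h1 := hr_run2 m (by omega) le_rfl
      rw [hπr2] at h1
      omega
    rcases hb1or with h1 | h1 <;> rcases hb2or with h2 | h2
    · -- both endpoints in part 1 : contradiction via the neighbour in part 2
      exfalso
      obtain ⟨td, htd, hadjtd⟩ := hd2
      have h1' := h1; have h2' := h2; have htd' := htd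
      rw [hP1def] at h1' h2'
      rw [hP2def] at htd'
      have hidx3 : a0 + (td : ZMod n) = r + ((td + j1 + 1 : ℕ) : ZMod n) := by
        apply zpos_inj (a0 := a0)
        rw [zpos_g a0 (by omega), hr_run2 (td+j1+1) (by omega) (by omega)]
        omega
      have hmemR : f (a0 + (td : ZMod n)) ∈ (Arc G n f r m).verts :=
        ⟨td + j1 + 1, by omega, congrArg f hidx3⟩
      rcases hNw2 _ hadjtd hmemR with he | he
      · have hi := hinj he
        have heq : td = tb1 := by
          have h3 := zpos_g a0 (t := td) (by omega)
          rw [hi, hπr] at h3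
          omega
        rw [heq] at htd
        exact hdisj tb1 h1 htd
      · have hi := hinj he
        have heq : td = tb2 := by
          have h3 := zpos_g a0 (t := td) (by omega)
          rw [hi, hπr2] at h3
          omega
        rw [heq] at htd
        exact hdisj tb2 h2 htd
    · -- first endpoint in part 1, second in part 2 : R is contained in P
      left
      apply arc_le hm1
      intro j hj
      have h1' := h1; have h2' := h2
      rw [hP1def] at h1'
      rw [hP2def] at h2'
      rcases le_or_gt j j1 with hc | hc
      · refine ⟨tb1 + j - pp, by omega, ?_⟩
        apply zpos_inj (a0 := a0)
        rw [hr_run1 j hc, hp_run1 (tb1 + j - pp) (by omega)]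
        omega
      · refine ⟨(j - j1 - 1) + j0 + 1, by omega, ?_⟩
        apply zpos_inj (a0 := a0)
        rw [hr_run2 j hc (by omega), hp_run2 ((j - j1 - 1) + j0 + 1) (by omega) (by omega)]
        omega
    · -- first endpoint in part 2, second in part 1 : impossible
      exfalso
      have h1' := h1; have h2' := h2
      rw [hP2def] at h1'
      rw [hP1def] at h2'
      omega
    · -- both endpoints in part 2 : contradiction via the neighbour in part 1
      exfalso
      obtain ⟨td, htd, hadjtd⟩ := hd1
      have h1' := h1; have h2' := h2; have htd' := htd
      rw [hP2def] at h1' h2'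
      rw [hP1def] at htd'
      have hidx3 : a0 + (td : ZMod n) = r + ((td - tb1 : ℕ) : ZMod n) := by
        apply zpos_inj (a0 := a0)
        rw [zpos_g a0 (by omega), hr_run1 (td - tb1) (by omega)]
        omega
      have hmemR : f (a0 + (td : ZMod n)) ∈ (Arc G n f r m).verts :=
        ⟨td - tb1, by omega, congrArg f hidx3⟩
      rcases hNw2 _ hadjtd hmemR with he | he
      · have hi := hinj he
        have heq : td = tb1 := by
          have h3 := zpos_g a0 (t := td) (by omega)
          rw [hi, hπr] at h3
          omega
        rw [heq] at htd
        exact hdisj tb1 htd h1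
      · have hi := hinj he
        have heq : td = tb2 := by
          have h3 := zpos_g a0 (t := td) (by omega)
          rw [hi, hπr2] at h3
          omega
        rw [heq] at htd
        exact hdisj tb2 htd h2
  · -- R does not cross the cut : R is contained in Q
    push_neg at hcross
    have hr_run : ∀ j : ℕ, j ≤ m → zpos a0 (r + (j:ZMod n)) = tb1 + j := by
      have hz := zpos_run (a0 := a0) (s := r) (L := m) (by
        intro j hj hcon
        rw [ha0α] at hcon
        exact hcross j hj hcon)
      intro j hj
      rw [hz j hj, hπr]
    have htb2 : tb2 = tb1 + m := by
      have h1 := hr_run m le_rfl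
      rw [hπr2] at h1
      omega
    have hbnd : qq ≤ tb1 ∧ tb1 + m ≤ qq + l := by
      rcases hb1or with h1 | h1 <;> rcases hb2or with h2 | h2
      · rw [hP1def] at h1 h2; omega
      · rw [hP1def] at h1; rw [hP2def] at h2; omega
      · rw [hP2def] at h1; rw [hP1def] at h2; omega
      · rw [hP2def] at h1 h2; omega
    right
    apply arc_le hm1
    intro j hj
    refine ⟨tb1 - qq + j, by omega, ?_⟩
    apply zpos_inj (a0 := a0)
    rw [hr_run j (by omega), hq_run (tb1 - qq + j) (by omega)]
    omega




end Core

end CobAux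

/-- if `w` attaches to both wedges of a good pair and has a
neighbour in each of the two components of their intersection, then `σ w`
improves at least one of them. -/
theorem attach_both_improves [Finite V] (G : SimpleGraph V) (C I : Set V)
    (hcob : IsCobweb G C I) (σ : V → G.Subgraph)
    (hσ : ∀ v ∈ I, IsWedge G C I (σ v) v)
    (u v : V) (hu : GoodVertex G I σ u) (hv : GoodVertex G I σ v)
    (hcomp : Nat.card ((σ u ⊓ σ v).coe.ConnectedComponent) = 2)
    (w : V) (hw : w ∈ I)
    (hau : Attaches G w (σ u)) (hav : Attaches G w (σ v))
    (hnb : ∀ D : (σ u ⊓ σ v).coe.ConnectedComponent,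
      ∃ d ∈ Subtype.val '' D.supp, G.Adj w d) :
    Improves G (σ w) w (σ u) u ∨ Improves G (σ w) w (σ v) v := by
  classical
  obtain ⟨⟨hCconn, hCdeg⟩, hIC, hInonempty, hIind, hdeg2, hNbr⟩ := hcob
  have hu_mem : u ∈ I := hu.1
  have hv_mem : v ∈ I := hv.1
  obtain ⟨⟨hσu_conn, hσu_reg⟩, -, huV, huN⟩ := hσ u hu_mem
  obtain ⟨⟨hσv_conn, hσv_reg⟩, -, hvV, hvN⟩ := hσ v hv_mem
  obtain ⟨⟨hσw_conn, hσw_reg⟩, -, hwV, hwN⟩ := hσ w hw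
  have huv : u ≠ v := by
    rintro rfl
    rw [inf_idem, CobAux.card_components_connected hσu_conn] at hcomp
    omega
  have hu_in : u ∈ (σ u).verts := by
    have h0 : u ∈ ({u} : Set V) := rfl
    rw [← huV] at h0
    exact h0.1
  have hv_in : v ∈ (σ v).verts := by
    have h0 : v ∈ ({v} : Set V) := rfl
    rw [← hvV] at h0
    exact h0.1
  have hw_in : w ∈ (σ w).verts := by
    have h0 : w ∈ ({w} : Set V) := rfl
    rw [← hwV] at h0
    exact h0.1
  -- the cycle C as a subgraph
  set K : G.Subgraph :=
    { verts := C
      Adj := fun a b => a ∈ C ∧ b ∈ C ∧ G.Adj a b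
      adj_sub := fun h => h.2.2
      edge_vert := fun h => h.1
      symm := ⟨by rintro a b ⟨h1, h2, h3⟩; exact ⟨h2, h1, h3.symm⟩⟩ } with hK
  haveI : Fintype ↥K.verts := Fintype.ofFinite _
  have hKconn : K.coe.Connected := by
    have hiso : K.coe = G.induce C := by
      ext x y
      constructor
      · intro h
        exact h.2.2
      · intro h
        exact ⟨x.2, y.2, h⟩
    rw [hiso]
    exact hCconn
  have hKreg : ∀ y : ↥K.verts, (K.coe.neighborSet y).ncard = 2 := by
    intro y
    have himg : Subtype.val '' (K.coe.neighborSet y) = G.neighborSet y.val ∩ C := by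
      ext z
      constructor
      · rintro ⟨⟨z', hz'⟩, hadj, rfl⟩
        exact ⟨hadj.2.2, hadj.2.1⟩
      · rintro ⟨hgz, hzC⟩
        exact ⟨⟨z, hzC⟩, ⟨y.2, hzC, hgz⟩, rfl⟩
    rw [← hCdeg y.val y.2, ← himg, Set.ncard_image_of_injective _ Subtype.val_injective]
  obtain ⟨x0, ωC, hcycC, hcovC, hcompC⟩ := CobAux.exists_ham_cycle hKconn hKreg
  set n := ωC.length with hn
  have hn3 : 3 ≤ n := hcycC.three_le_length
  haveI : NeZero n := ⟨by omega⟩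
  set f : ZMod n → V := fun i => ((ωC.getVert i.val : ↥K.verts) : V) with hf
  have hinj : Function.Injective f := by
    intro i j hij
    have h1 : ωC.getVert i.val = ωC.getVert j.val := Subtype.ext hij
    have h2 := CobAux.cycleInj hcycC (i := i.val) (j := j.val)
      (by have := ZMod.val_lt i; omega) (by have := ZMod.val_lt j; omega) h1
    exact ZMod.val_injective n h2
  have hrange : ∀ y, y ∈ C → ∃ i, f i = y := by
    intro y hy
    obtain ⟨j, hjv, hjle⟩ := Walk.mem_support_iff_exists_getVert.mp (hcovC ⟨y, hy⟩)
    rcases Nat.lt_or_ge j n with hlt | hge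
    · refine ⟨(j : ZMod n), ?_⟩
      rw [hf]
      simp only
      rw [ZMod.val_cast_of_lt hlt, hjv]
    · have hjn : j = n := by omega
      refine ⟨0, ?_⟩
      rw [hf]
      simp only [ZMod.val_zero]
      rw [ωC.getVert_zero]
      rw [hjn] at hjv
      rw [show (n : ℕ) = ωC.length from hn] at hjv
      rw [ωC.getVert_length] at hjv
      rw [hjv]
  have hfmem : ∀ i, f i ∈ C := fun i => (ωC.getVert i.val).2
  have hadjD : ∀ i : ZMod n, G.Adj (f i) (f (i+1)) := by
    intro i
    have hvlt := ZMod.val_lt i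
    by_cases hc : i.val = n - 1
    · have hi0 : i + 1 = 0 := by
        have hlast := CobAux.val_last hc
        rw [hlast]
        ring
      have hadj := ωC.adj_getVert_succ (i := n - 1) (by omega)
      have h1 : n - 1 + 1 = n := by omega
      rw [h1] at hadj
      have hG : G.Adj ((ωC.getVert (n-1) : ↥K.verts) : V) ((ωC.getVert n : ↥K.verts) : V) :=
        (hadj : K.Adj _ _).2.2
      have hgvn : (ωC.getVert n : ↥K.verts) = ωC.getVert 0 := by
        rw [ωC.getVert_zero, show (n:ℕ) = ωC.length from hn, ωC.getVert_length]
      rw [hgvn] at hG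
      rw [hf]
      simp only
      rw [hc, hi0]
      simpa using hG
    · have hi1 : (i + 1).val = i.val + 1 := CobAux.val_succ hc
      have hadj := ωC.adj_getVert_succ (i := i.val) (by omega)
      have hG : G.Adj ((ωC.getVert i.val : ↥K.verts) : V)
          ((ωC.getVert (i.val+1) : ↥K.verts) : V) := (hadj : K.Adj _ _).2.2
      rw [hf]
      simp only
      rw [hi1]
      exact hG
  have hadjC : ∀ i j : ZMod n, G.Adj (f i) (f j) ↔ j = i + 1 ∨ i = j + 1 := by
    intro i j
    constructor
    · intro hadj
      have hmem2 : f j ∈ G.neighborSet (f i) ∩ C := ⟨hadj, hfmem j⟩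
      have hcard := hCdeg (f i) (hfmem i)
      have hne : f (i+1) ≠ f (i-1) := by
        intro hcon
        have h1 := hinj hcon
        have h2 : (2 : ZMod n) = 0 := by linear_combination h1
        have hval := congrArg ZMod.val h2
        rw [show ((2:ZMod n)) = ((2:ℕ) : ZMod n) by push_cast; ring,
          ZMod.val_cast_of_lt (by omega), ZMod.val_zero] at hval
        omega
      have hsub : ({f (i+1), f (i-1)} : Set V) ⊆ G.neighborSet (f i) ∩ C := by
        rintro z (rfl | rfl)
        · exact ⟨hadjD i, hfmem _⟩
        · refine ⟨?_, hfmem _⟩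
          have h3 := hadjD (i - 1)
          rw [sub_add_cancel] at h3
          exact h3.symm
      have hseteq : ({f (i+1), f (i-1)} : Set V) = G.neighborSet (f i) ∩ C :=
        Set.eq_of_subset_of_ncard_le hsub
          (by rw [hcard, Set.ncard_pair hne]) (Set.toFinite _)
      rw [← hseteq] at hmem2
      rcases hmem2 with h | h
      · left
        exact hinj h
      · right
        rw [Set.mem_singleton_iff] at h
        have h4 := hinj h
        linear_combination -h4
    · rintro (rfl | h)
      · exact hadjD i
      · rw [h]
        exact (hadjD j).symm
  have hCsubAll : ∀ (W : G.Subgraph) (x : V), W.verts ∩ I = {x} →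
      ∀ y ∈ W.verts, y ≠ x → ∃ i, f i = y := by
    intro W x hWx y hy hyx
    apply hrange
    by_contra hyC
    have hyI : y ∈ I := by rw [hIC]; exact hyC
    have h0 : y ∈ W.verts ∩ I := ⟨hy, hyI⟩
    rw [hWx] at h0
    exact hyx h0
  obtain ⟨pz, kz, hk1, hkn, hequ, huadj1, huadj2⟩ :=
    CobAux.wedge_arc hn3 hinj hadjC hσu_conn hσu_reg hu_in (hCsubAll _ _ huV)
  obtain ⟨qz, lz, hl1, hln, heqv, hvadj1, hvadj2⟩ :=
    CobAux.wedge_arc hn3 hinj hadjC hσv_conn hσv_reg hv_in (hCsubAll _ _ hvV)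
  obtain ⟨rz, mz, hm1, hmn, heqw, hwadj1, hwadj2⟩ :=
    CobAux.wedge_arc hn3 hinj hadjC hσw_conn hσw_reg hw_in (hCsubAll _ _ hwV)
  have hu_nv : u ∉ (σ v).verts := by
    intro hmem
    have h0 : u ∈ (σ v).verts ∩ I := ⟨hmem, hu_mem⟩
    rw [hvV] at h0
    exact huv h0
  have hv_nu : v ∉ (σ u).verts := by
    intro hmem
    have h0 : v ∈ (σ u).verts ∩ I := ⟨hmem, hv_mem⟩
    rw [huV] at h0
    exact huv h0.symm
  have hPQ : σ u ⊓ σ v = CobAux.Arc G n f pz kz ⊓ CobAux.Arc G n f qz lz := by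
    rw [← hequ, ← heqv]
    refine Subgraph.ext ?_ ?_
    · rw [Subgraph.verts_inf, Subgraph.verts_inf, Subgraph.deleteVerts_verts,
        Subgraph.deleteVerts_verts]
      ext y
      simp only [Set.mem_inter_iff, Set.mem_diff, Set.mem_singleton_iff]
      constructor
      · rintro ⟨h1, h2⟩
        exact ⟨⟨h1, fun hc => hu_nv (hc ▸ h2)⟩, ⟨h2, fun hc => hv_nu (hc ▸ h1)⟩⟩
      · rintro ⟨⟨h1, -⟩, ⟨h2, -⟩⟩
        exact ⟨h1, h2⟩
    · funext a b
      apply propext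
      rw [Subgraph.inf_adj, Subgraph.inf_adj, Subgraph.deleteVerts_adj,
        Subgraph.deleteVerts_adj]
      constructor
      · rintro ⟨h1, h2⟩
        refine ⟨⟨h1.fst_mem, ?_, h1.snd_mem, ?_, h1⟩, ⟨h2.fst_mem, ?_, h2.snd_mem, ?_, h2⟩⟩
        · simp only [Set.mem_singleton_iff]
          rintro rfl
          exact hu_nv h2.fst_mem
        · simp only [Set.mem_singleton_iff]
          rintro rfl
          exact hu_nv h2.snd_mem
        · simp only [Set.mem_singleton_iff]
          rintro rfl
          exact hv_nu h1.fst_mem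
        · simp only [Set.mem_singleton_iff]
          rintro rfl
          exact hv_nu h1.snd_mem
      · rintro ⟨⟨-, -, -, -, h1⟩, ⟨-, -, -, -, h2⟩⟩
        exact ⟨h1, h2⟩
  rw [hPQ] at hcomp hnb
  have hwu : w ≠ u := by rintro rfl; exact hau.1 hu_in
  have hNsub : ∀ y, G.Adj w y →
      y ∈ (CobAux.Arc G n f pz kz ⊓ CobAux.Arc G n f qz lz).verts := by
    intro y hadj
    rw [Subgraph.verts_inf, ← hequ, ← heqv, Subgraph.deleteVerts_verts,
      Subgraph.deleteVerts_verts]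
    have hyu : y ∈ (σ u).verts := hau.2 hadj
    have hyv : y ∈ (σ v).verts := hav.2 hadj
    refine ⟨⟨hyu, ?_⟩, ⟨hyv, ?_⟩⟩
    · simp only [Set.mem_singleton_iff]
      intro hyy
      subst hyy
      exact hIind w hw _ hu_mem hadj
    · simp only [Set.mem_singleton_iff]
      intro hyy
      subst hyy
      exact hIind w hw _ hv_mem hadj
  have hwb1 : G.Adj w (f rz) := hwadj1.adj_sub
  have hwb2 : G.Adj w (f (rz + (mz:ℕ))) := hwadj2.adj_sub
  have hb1b2ne : f rz ≠ f (rz + (mz:ℕ)) := by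
    intro hcon
    have h1 := hinj hcon
    have hm0 : ((mz:ℕ) : ZMod n) = 0 := by linear_combination -h1
    have hval := congrArg ZMod.val hm0
    rw [ZMod.val_cast_of_lt (by omega), ZMod.val_zero] at hval
    omega
  have hpaireq : ({f rz, f (rz+(mz:ℕ))} : Set V) = (σ w).verts ∩ G.neighborSet w := by
    refine Set.eq_of_subset_of_ncard_le ?_ ?_ (Set.toFinite _)
    · rintro z (rfl | rfl)
      · exact ⟨hwadj1.snd_mem, hwb1⟩
      · exact ⟨hwadj2.snd_mem, hwb2⟩
    · rw [hwN, Set.ncard_pair hb1b2ne]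
  have hNw2 : ∀ y, G.Adj w y → y ∈ (CobAux.Arc G n f rz mz).verts →
      y = f rz ∨ y = f (rz + (mz:ℕ)) := by
    intro y hadj hymem
    rw [← heqw, Subgraph.deleteVerts_verts] at hymem
    have h0 : y ∈ (σ w).verts ∩ G.neighborSet w := ⟨hymem.1, hadj⟩
    rw [← hpaireq] at h0
    exact h0
  have hmain := CobAux.core hn3 hinj hadjC hk1 hkn hl1 hln hm1 hmn hcomp hNsub hnb hNw2
    hwb1 hwb2
  rcases hmain with hle | hle
  · left
    constructor
    · rw [heqw, hequ]
      exact hle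
    · intro hcon
      rw [heqw, hequ] at hcon
      obtain ⟨hrs, hrm⟩ := CobAux.arc_endpoints hn3 hinj hadjD hm1 hmn hk1 hkn hcon
      apply hNbr w hw u hu_mem hwu
      intro z hz
      have hzmem : z ∈ (CobAux.Arc G n f rz mz).verts := by
        have h0 := hNsub z hz
        rw [Subgraph.verts_inf] at h0
        rw [hcon]
        exact h0.1
      rcases hNw2 z hz hzmem with he | he
      · rw [he, hrs]
        exact huadj1.adj_sub
      · rw [he, hrs, hrm]
        exact huadj2.adj_sub
  · right
    have hwv : w ≠ v := by rintro rfl; exact hav.1 hv_in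
    constructor
    · rw [heqw, heqv]
      exact hle
    · intro hcon
      rw [heqw, heqv] at hcon
      obtain ⟨hrs, hrm⟩ := CobAux.arc_endpoints hn3 hinj hadjD hm1 hmn hl1 hln hcon
      apply hNbr w hw v hv_mem hwv
      intro z hz
      have hzmem : z ∈ (CobAux.Arc G n f rz mz).verts := by
        have h0 := hNsub z hz
        rw [Subgraph.verts_inf] at h0
        rw [hcon]
        exact h0.2
      rcases hNw2 z hz hzmem with he | he
      · rw [he, hrs]
        exact hvadj1.adj_sub
      · rw [he, hrs, hrm]
        exact hvadj2.adj_sub
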